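/- arXiv:2302.09235 — 6 statements merged into one kernel-verified Lean document; each statement's English description precedes it below -/
import Mathlib

section
/- For every weight vector w ∈ ℝ^{md} and every direction v ∈ ℝ^{md}, the Hessian of the empirical loss satisfies the self-bounded weak-convexity property ⟨v, ∇²F̂(w) v⟩ ≥ −(L·R²/√m)·F̂(w)·‖v‖², i.e., λ_min(∇²F̂(w)) ≥ −(L·R²/√m)·F̂(w). -/
open scoped BigOperators

lemma deriv_nonneg_of_monotone {g : ℝ → ℝ} (hm : Monotone g) {g' u : ℝ}
    (h : HasDerivAt g g' u) : 0 ≤ g' := by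
  have ht := hasDerivAt_iff_tendsto_slope.mp h
  refine ge_of_tendsto ht ?_
  filter_upwards [self_mem_nhdsWithin] with z hz
  have hz' : z ≠ u := hz
  rw [slope_def_field]
  rcases hz'.lt_or_gt with hlt | hgt
  · have h1 : g z - g u ≤ 0 := by simpa using hm hlt.le
    have h2 : z - u < 0 := by linarith
    rw [div_nonneg_iff]
    right
    exact ⟨h1, h2.le⟩
  · apply div_nonneg
    · simpa using hm hgt.le
    · linarith

lemma iteratedFDeriv_two_eq_line {E : Type*} [NormedAddCommGroup E] [NormedSpace ℝ E]
    (F : E → ℝ) (hF : ContDiff ℝ 2 F) (w v : E) :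
    iteratedFDeriv ℝ 2 F w ![v, v] = deriv (deriv (fun t : ℝ => F (w + t • v))) 0 := by
  have hline : ∀ t : ℝ, HasDerivAt (fun t : ℝ => w + t • v) v t := fun t => by
    simpa using ((hasDerivAt_id t).smul_const v).const_add w
  have hF1 : ContDiff ℝ 1 (fderiv ℝ F) := hF.fderiv_right (by norm_num)
  have hd : deriv (fun t : ℝ => F (w + t • v)) = fun t => fderiv ℝ F (w + t • v) v := by
    funext t
    exact ((hF.differentiable (by norm_num) _).hasFDerivAt.comp_hasDerivAt t (hline t)).deriv
  rw [hd]
  have h2 : HasDerivAt (fun t : ℝ => fderiv ℝ F (w + t • v)) (fderiv ℝ (fderiv ℝ F) w v) 0 := by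
    have := ((hF1.differentiable (by norm_num)) (w + (0:ℝ) • v)).hasFDerivAt.comp_hasDerivAt 0 (hline 0)
    simpa [Function.comp_def] using this
  have h3 : HasDerivAt (fun t : ℝ => fderiv ℝ F (w + t • v) v) (fderiv ℝ (fderiv ℝ F) w v v) 0 := by
    simpa using h2.clm_apply (hasDerivAt_const (0:ℝ) v)
  rw [h3.deriv, iteratedFDeriv_two_apply]
  simp

/-- Two-layer network `Φ(w,x) = (1/√m) ∑_j a_j σ(⟨w_j, x⟩)`. -/
noncomputable def Phi {m d : ℕ} (a : Fin m → ℝ) (σ : ℝ → ℝ)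
    (w : EuclideanSpace ℝ (Fin m × Fin d)) (x : EuclideanSpace ℝ (Fin d)) : ℝ :=
  (1 / Real.sqrt m) * ∑ j : Fin m, a j * σ (∑ i : Fin d, w (j, i) * x i)

/-- Empirical loss `F̂(w) = (1/n) ∑_i f(y_i Φ(w, x_i))`. -/
noncomputable def empLoss {m d n : ℕ} (a : Fin m → ℝ) (σ f : ℝ → ℝ)
    (x : Fin n → EuclideanSpace ℝ (Fin d)) (y : Fin n → ℝ)
    (w : EuclideanSpace ℝ (Fin m × Fin d)) : ℝ :=
  (1 / (n : ℝ)) * ∑ i : Fin n, f (y i * Phi a σ w (x i))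

/-- self-bounded weak convexity of the empirical loss:
`⟨v, ∇²F̂(w) v⟩ ≥ −(L R²/√m) F̂(w) ‖v‖²`. -/
theorem self_bounded_weak_convexity
    {m d n : ℕ} (ℓ L R : ℝ)
    (a : Fin m → ℝ) (ha : ∀ j, a j = 1 ∨ a j = -1)
    (σ : ℝ → ℝ) (hσ : ContDiff ℝ 2 σ)
    (hσ' : ∀ u, |deriv σ u| ≤ ℓ) (hσ'' : ∀ u, |deriv (deriv σ) u| ≤ L)
    (f : ℝ → ℝ) (hf : ContDiff ℝ 2 f) (hfconv : ConvexOn ℝ Set.univ f)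
    (hfnonneg : ∀ u, 0 ≤ f u) (hfself : ∀ u, |deriv f u| ≤ f u)
    (x : Fin n → EuclideanSpace ℝ (Fin d)) (y : Fin n → ℝ)
    (hx : ∀ i, ‖x i‖ ≤ R) (hy : ∀ i, y i = 1 ∨ y i = -1)
    (w v : EuclideanSpace ℝ (Fin m × Fin d)) :
    iteratedFDeriv ℝ 2 (empLoss a σ f x y) w ![v, v]
      ≥ -((L * R ^ 2 / Real.sqrt m) * empLoss a σ f x y w * ‖v‖ ^ 2) := by
  classical
  -- trivial case `n = 0`
  rcases Nat.eq_zero_or_pos n with hn | hn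
  · subst hn
    have hF0 : empLoss a σ f x y = fun _ => 0 := by
      funext u; simp [empLoss]
    rw [hF0, iteratedFDeriv_const_of_ne (by norm_num)]
    simp
  -- differentiability facts
  have hL0 : 0 ≤ L := le_trans (abs_nonneg _) (hσ'' 0)
  have hR0 : 0 ≤ R := le_trans (norm_nonneg _) (hx ⟨0, hn⟩)
  have hf2 : ContDiff ℝ ((1 : ℕ∞) + 1) f := by
    have : ((1 : ℕ∞) + 1 : WithTop ℕ∞) = 2 := by norm_num
    rw [this]; exact hf
  have hf1 : ContDiff ℝ 1 (deriv f) := (contDiff_succ_iff_deriv.mp hf2).2.2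
  have hσ2 : ContDiff ℝ ((1 : ℕ∞) + 1) σ := by
    have : ((1 : ℕ∞) + 1 : WithTop ℕ∞) = 2 := by norm_num
    rw [this]; exact hσ
  have hσ1 : ContDiff ℝ 1 (deriv σ) := (contDiff_succ_iff_deriv.mp hσ2).2.2
  have hfd : ∀ u : ℝ, HasDerivAt f (deriv f u) u := fun u =>
    (hf.differentiable (by norm_num) u).hasDerivAt
  have hfd' : ∀ u : ℝ, HasDerivAt (deriv f) (deriv (deriv f) u) u := fun u =>
    (hf1.differentiable (by norm_num) u).hasDerivAt
  have hσd : ∀ u : ℝ, HasDerivAt σ (deriv σ u) u := fun u =>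
    (hσ.differentiable (by norm_num) u).hasDerivAt
  have hσd' : ∀ u : ℝ, HasDerivAt (deriv σ) (deriv (deriv σ) u) u := fun u =>
    (hσ1.differentiable (by norm_num) u).hasDerivAt
  -- second derivative of `f` is nonnegative
  have hf'' : ∀ u : ℝ, 0 ≤ deriv (deriv f) u := by
    intro u
    have hmono : Monotone (deriv f) := by
      have := hfconv.monotoneOn_deriv (fun z _ => (hf.differentiable (by norm_num) z))
      exact monotoneOn_univ.mp this
    exact deriv_nonneg_of_monotone hmono (hfd' u)
  -- smoothness of the empirical loss
  have hPhiCD : ∀ i : Fin n, ContDiff ℝ 2 (fun u : EuclideanSpace ℝ (Fin m × Fin d) =>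
      y i * Phi a σ u (x i)) := by
    intro i
    unfold Phi
    refine contDiff_const.mul (contDiff_const.mul (ContDiff.sum fun j _ => ?_))
    refine contDiff_const.mul (hσ.comp (ContDiff.sum fun k _ => ?_))
    exact ((EuclideanSpace.proj ((j, k) : Fin m × Fin d) :
      EuclideanSpace ℝ (Fin m × Fin d) →L[ℝ] ℝ).contDiff).mul contDiff_const
  have hFCD : ContDiff ℝ 2 (empLoss a σ f x y) := by
    unfold empLoss
    exact contDiff_const.mul (ContDiff.sum fun i _ => hf.comp (hPhiCD i))
  -- notation
  set s : ℝ := 1 / Real.sqrt m with hs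
  have hs0 : 0 ≤ s := by
    rw [hs]; positivity
  set c : Fin n → Fin m → ℝ := fun i j => ∑ k, w (j, k) * x i k with hc
  set b : Fin n → Fin m → ℝ := fun i j => ∑ k, v (j, k) * x i k with hb
  set z : Fin n → ℝ → ℝ := fun i t => y i * (s * ∑ j, a j * σ (c i j + t * b i j)) with hzdef
  set z1 : Fin n → ℝ → ℝ :=
    fun i t => y i * (s * ∑ j, a j * (deriv σ (c i j + t * b i j) * b i j)) with hz1def
  set z2 : Fin n → ℝ :=
    fun i => y i * (s * ∑ j, a j * (deriv (deriv σ) (c i j) * b i j * b i j)) with hz2def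
  -- the loss along the line
  have hkey : ∀ t : ℝ, empLoss a σ f x y (w + t • v) = (1 / (n : ℝ)) * ∑ i, f (z i t) := by
    intro t
    unfold empLoss Phi
    congr 1
    refine Finset.sum_congr rfl fun i _ => ?_
    congr 1
    rw [hzdef]
    simp only [← mul_assoc]
    congr 1
    refine Finset.sum_congr rfl fun j _ => ?_
    congr 2
    rw [hc, hb, Finset.mul_sum, ← Finset.sum_add_distrib]
    refine Finset.sum_congr rfl fun k _ => ?_
    have : (w + t • v) (j, k) = w (j, k) + t * v (j, k) := by
      simp [PiLp.add_apply, PiLp.smul_apply, smul_eq_mul]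
    rw [this]; ring
  set g : ℝ → ℝ := fun t => (1 / (n : ℝ)) * ∑ i, f (z i t) with hgdef
  -- first derivative of `z i`
  have hlinZ : ∀ (i : Fin n) (j : Fin m) (t : ℝ),
      HasDerivAt (fun t : ℝ => c i j + t * b i j) (b i j) t := by
    intro i j t
    simpa using ((hasDerivAt_id t).mul_const (b i j)).const_add (c i j)
  have hz : ∀ (i : Fin n) (t : ℝ), HasDerivAt (z i) (z1 i t) t := by
    intro i t
    rw [hzdef, hz1def]
    refine HasDerivAt.const_mul _ (HasDerivAt.const_mul _ (HasDerivAt.fun_sum fun j _ => ?_))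
    exact HasDerivAt.const_mul _ ((hσd _).comp t (hlinZ i j t))
  -- second derivative of `z i` at `0`
  have hz1 : ∀ i : Fin n, HasDerivAt (z1 i) (z2 i) 0 := by
    intro i
    rw [hz1def, hz2def]
    refine HasDerivAt.const_mul _ (HasDerivAt.const_mul _ (HasDerivAt.fun_sum fun j _ => ?_))
    refine HasDerivAt.const_mul _ ?_
    have h1 : HasDerivAt (fun t : ℝ => deriv σ (c i j + t * b i j))
        (deriv (deriv σ) (c i j) * b i j) 0 := by
      have := (hσd' (c i j + 0 * b i j)).comp 0 (hlinZ i j 0)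
      simpa [Function.comp_def] using this
    simpa using h1.mul_const (b i j)
  -- derivatives of `g`
  set g1 : ℝ → ℝ := fun t => (1 / (n : ℝ)) * ∑ i, deriv f (z i t) * z1 i t with hg1def
  have hg : ∀ t : ℝ, HasDerivAt g (g1 t) t := by
    intro t
    rw [hgdef, hg1def]
    exact HasDerivAt.const_mul _ (HasDerivAt.fun_sum fun i _ => (hfd (z i t)).comp t (hz i t))
  set V : ℝ := (1 / (n : ℝ)) *
      ∑ i, (deriv (deriv f) (z i 0) * z1 i 0 * z1 i 0 + deriv f (z i 0) * z2 i) with hVdef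
  have hg1 : HasDerivAt g1 V 0 := by
    rw [hg1def, hVdef]
    refine HasDerivAt.const_mul _ (HasDerivAt.fun_sum fun i _ => ?_)
    have h1 : HasDerivAt (fun t : ℝ => deriv f (z i t))
        (deriv (deriv f) (z i 0) * z1 i 0) 0 := (hfd' (z i 0)).comp 0 (hz i 0)
    exact h1.mul (hz1 i)
  -- identify the iterated derivative with `V`
  have hiter : iteratedFDeriv ℝ 2 (empLoss a σ f x y) w ![v, v] = V := by
    rw [iteratedFDeriv_two_eq_line _ hFCD w v]
    have hfun : (fun t : ℝ => empLoss a σ f x y (w + t • v)) = g := by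
      funext t; rw [hkey t, hgdef]
    rw [hfun]
    have hdg : deriv g = g1 := funext fun t => (hg t).deriv
    rw [hdg, hg1.deriv]
  rw [hiter]
  -- value of the loss at `w`
  have hFw : empLoss a σ f x y w = (1 / (n : ℝ)) * ∑ i, f (z i 0) := by
    have := hkey 0
    simpa using this
  -- bound on `z2 i`
  have hbsq : ∀ i : Fin n, ∑ j, b i j ^ 2 ≤ R ^ 2 * ‖v‖ ^ 2 := by
    intro i
    have hxsq : ∑ k, (x i k) ^ 2 ≤ R ^ 2 := by
      have h1 : ‖x i‖ ^ 2 = ∑ k, (x i k) ^ 2 := by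
        rw [EuclideanSpace.norm_eq]
        rw [Real.sq_sqrt (Finset.sum_nonneg fun k _ => sq_nonneg _)]
        simp [Real.norm_eq_abs, sq_abs]
      calc ∑ k, (x i k) ^ 2 = ‖x i‖ ^ 2 := h1.symm
        _ ≤ R ^ 2 := by
            exact pow_le_pow_left₀ (norm_nonneg _) (hx i) 2
    have hvnorm : ‖v‖ ^ 2 = ∑ j, ∑ k, (v (j, k)) ^ 2 := by
      rw [EuclideanSpace.norm_eq]
      rw [Real.sq_sqrt (Finset.sum_nonneg fun p _ => sq_nonneg _)]
      simp [Fintype.sum_prod_type, Real.norm_eq_abs, sq_abs]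
    rw [hvnorm]
    calc ∑ j, b i j ^ 2
        ≤ ∑ j, (∑ k, (v (j, k)) ^ 2) * (∑ k, (x i k) ^ 2) := by
          refine Finset.sum_le_sum fun j _ => ?_
          rw [hb]
          exact Finset.sum_mul_sq_le_sq_mul_sq _ _ _
      _ ≤ ∑ j, (∑ k, (v (j, k)) ^ 2) * R ^ 2 := by
          refine Finset.sum_le_sum fun j _ => ?_
          exact mul_le_mul_of_nonneg_left hxsq (Finset.sum_nonneg fun k _ => sq_nonneg _)
      _ = R ^ 2 * ∑ j, ∑ k, (v (j, k)) ^ 2 := by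
          rw [← Finset.sum_mul, mul_comm]
  set K : ℝ := L * R ^ 2 / Real.sqrt m with hK
  have hKs : K = s * (L * (R ^ 2)) := by
    rw [hK, hs]; ring
  have hz2bound : ∀ i : Fin n, |z2 i| ≤ K * ‖v‖ ^ 2 := by
    intro i
    have hyi : |y i| = 1 := by rcases hy i with h | h <;> simp [h]
    rw [hz2def]
    rw [abs_mul, hyi, one_mul, abs_mul, abs_of_nonneg hs0]
    calc s * |∑ j, a j * (deriv (deriv σ) (c i j) * b i j * b i j)|
        ≤ s * ∑ j, L * b i j ^ 2 := by
          refine mul_le_mul_of_nonneg_left ?_ hs0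
          refine le_trans (Finset.abs_sum_le_sum_abs _ _) (Finset.sum_le_sum fun j _ => ?_)
          have haj : |a j| = 1 := by rcases ha j with h | h <;> simp [h]
          rw [abs_mul, haj, one_mul, abs_mul, abs_mul]
          calc |deriv (deriv σ) (c i j)| * |b i j| * |b i j|
              ≤ L * |b i j| * |b i j| := by
                refine mul_le_mul_of_nonneg_right
                  (mul_le_mul_of_nonneg_right (hσ'' _) (abs_nonneg _)) (abs_nonneg _)
            _ = L * b i j ^ 2 := by rw [mul_assoc, ← abs_mul, abs_mul_self]; ring
      _ = s * (L * ∑ j, b i j ^ 2) := by simp [Finset.mul_sum]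
      _ ≤ s * (L * (R ^ 2 * ‖v‖ ^ 2)) := by
          exact mul_le_mul_of_nonneg_left
            (mul_le_mul_of_nonneg_left (hbsq i) hL0) hs0
      _ = K * ‖v‖ ^ 2 := by rw [hKs]; ring
  -- final estimate
  have hterm : ∀ i : Fin n,
      -(f (z i 0) * (K * ‖v‖ ^ 2)) ≤
        deriv (deriv f) (z i 0) * z1 i 0 * z1 i 0 + deriv f (z i 0) * z2 i := by
    intro i
    have hA : 0 ≤ deriv (deriv f) (z i 0) * z1 i 0 * z1 i 0 := by
      rw [mul_assoc]
      exact mul_nonneg (hf'' _) (mul_self_nonneg _)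
    have hB : -(f (z i 0) * (K * ‖v‖ ^ 2)) ≤ deriv f (z i 0) * z2 i := by
      have h1 : |deriv f (z i 0) * z2 i| ≤ f (z i 0) * (K * ‖v‖ ^ 2) := by
        rw [abs_mul]
        exact mul_le_mul (hfself _) (hz2bound i) (abs_nonneg _) (hfnonneg _)
      have h2 := neg_abs_le (deriv f (z i 0) * z2 i)
      linarith
    linarith
  have hsum : -(∑ i, f (z i 0) * (K * ‖v‖ ^ 2)) ≤
      ∑ i, (deriv (deriv f) (z i 0) * z1 i 0 * z1 i 0 + deriv f (z i 0) * z2 i) := by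
    rw [← Finset.sum_neg_distrib]
    exact Finset.sum_le_sum fun i _ => hterm i
  have hn0 : (0 : ℝ) ≤ 1 / (n : ℝ) := by positivity
  have hVge : -(K * empLoss a σ f x y w * ‖v‖ ^ 2) ≤ V := by
    rw [hVdef, hFw]
    have := mul_le_mul_of_nonneg_left hsum hn0
    calc -(K * ((1 / (n : ℝ)) * ∑ i, f (z i 0)) * ‖v‖ ^ 2)
        = (1 / (n : ℝ)) * -(∑ i, f (z i 0) * (K * ‖v‖ ^ 2)) := by
          rw [← Finset.sum_mul]; ring
      _ ≤ (1 / (n : ℝ)) *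
          ∑ i, (deriv (deriv f) (z i 0) * z1 i 0 * z1 i 0 + deriv f (z i 0) * z2 i) := this
  exact hVge
end

section
/- (Generalized local quasi-convexity.) Let F̂ : ℝ^{d'} → ℝ be twice continuously differentiable and nonnegative, and suppose it is self-bounded weakly convex with parameter κ > 0, i.e., ⟨v, ∇²F̂(w) v⟩ ≥ −κ·F̂(w)·‖v‖² for all w, v ∈ ℝ^{d'}. Let w_1, w_2 ∈ ℝ^{d'} satisfy ‖w_1 − w_2‖ ≤ D for some D < √(2/κ), and set τ := (1 − κD²/2)^{−1}. Then for every point v on the line segment [w_1, w_2], F̂(v) ≤ τ·max{F̂(w_1), F̂(w_2)}. -/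
private lemma aux_line_max (g G H : ℝ → ℝ) (C : ℝ) (hC0 : 0 ≤ C)
    (hg' : ∀ t, HasDerivAt g (G t) t) (hG' : ∀ t, HasDerivAt G (H t) t)
    (a : ℝ) (ha : a ∈ Set.Ioo (0:ℝ) 1) (hGa : G a = 0)
    (hH : ∀ t ∈ Set.Icc (0:ℝ) 1, -C ≤ H t) :
    g a ≤ g 0 + C / 2 := by
  obtain ⟨h0, h1⟩ := ha
  set h : ℝ → ℝ := fun t => g t + C / 2 * (t - a) ^ 2 with hhdef
  set h' : ℝ → ℝ := fun t => G t + C * (t - a) with hh'def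
  have hh' : ∀ t : ℝ, HasDerivAt h (h' t) t := by
    intro t
    have h2 : HasDerivAt (fun t : ℝ => C / 2 * (t - a) ^ 2) (C * (t - a)) t := by
      have := (((hasDerivAt_id t).sub_const a).pow 2).const_mul (C / 2)
      refine this.congr_deriv ?_
      simp only [id_eq]
      ring
    exact (hg' t).add h2
  have hh'' : ∀ t : ℝ, HasDerivAt h' (H t + C) t := by
    intro t
    have h2 : HasDerivAt (fun t : ℝ => C * (t - a)) C t := by
      simpa using ((hasDerivAt_id t).sub_const a).const_mul C
    exact (hG' t).add h2
  have hmono : MonotoneOn h' (Set.Icc 0 1) := by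
    apply monotoneOn_of_deriv_nonneg (convex_Icc 0 1)
    · exact fun t _ => ((hh'' t).differentiableAt).continuousAt.continuousWithinAt
    · exact fun t _ => ((hh'' t).differentiableAt).differentiableWithinAt
    · intro t ht
      rw [interior_Icc] at ht
      rw [(hh'' t).deriv]
      have := hH t (Set.mem_Icc_of_Ioo ht)
      linarith
  have hh'a : h' a = 0 := by simp [hh'def, hGa]
  have hanti : AntitoneOn h (Set.Icc 0 a) := by
    apply antitoneOn_of_deriv_nonpos (convex_Icc 0 a)
    · exact fun t _ => ((hh' t).differentiableAt).continuousAt.continuousWithinAt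
    · exact fun t _ => ((hh' t).differentiableAt).differentiableWithinAt
    · intro t ht
      rw [interior_Icc] at ht
      rw [(hh' t).deriv]
      have htI : t ∈ Set.Icc (0:ℝ) 1 := ⟨ht.1.le, ht.2.le.trans h1.le⟩
      have := hmono htI (Set.mem_Icc.2 ⟨h0.le, h1.le⟩) ht.2.le
      rw [hh'a] at this
      exact this
  have hha : h a ≤ h 0 :=
    hanti (Set.left_mem_Icc.2 h0.le) (Set.right_mem_Icc.2 h0.le) h0.le
  have hhaval : h a = g a := by simp [hhdef]
  have hh0val : h 0 = g 0 + C / 2 * a ^ 2 := by simp [hhdef]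
  have ha1 : a ^ 2 ≤ 1 := by nlinarith
  rw [hhaval, hh0val] at hha
  nlinarith

/-- generalized local quasi-convexity for self-bounded weakly convex
functions. -/
theorem generalized_local_quasi_convexity
    {d' : ℕ} (F : EuclideanSpace ℝ (Fin d') → ℝ)
    (hF : ContDiff ℝ 2 F) (hFnonneg : ∀ w, 0 ≤ F w)
    (κ : ℝ) (hκ : 0 < κ)
    (hSBWC : ∀ w v : EuclideanSpace ℝ (Fin d'),
      iteratedFDeriv ℝ 2 F w ![v, v] ≥ -(κ * F w * ‖v‖ ^ 2))
    (w₁ w₂ : EuclideanSpace ℝ (Fin d')) (D : ℝ)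
    (hD : ‖w₁ - w₂‖ ≤ D) (hDκ : D < Real.sqrt (2 / κ)) :
    ∀ α : ℝ, α ∈ Set.Icc (0 : ℝ) 1 →
      F (α • w₁ + (1 - α) • w₂) ≤ (1 - κ * D ^ 2 / 2)⁻¹ * max (F w₁) (F w₂) := by
  intro α hα
  have hD0 : 0 ≤ D := le_trans (norm_nonneg _) hD
  have hp : 0 < 1 - κ * D ^ 2 / 2 := by
    have h2 : D ^ 2 < 2 / κ := by
      have := (Real.lt_sqrt hD0).mp hDκ
      linarith
    have h3 : κ * D ^ 2 < κ * (2 / κ) := mul_lt_mul_of_pos_left h2 hκ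
    rw [mul_div_cancel₀ _ (ne_of_gt hκ)] at h3
    linarith
  have hp1 : 1 - κ * D ^ 2 / 2 ≤ 1 := by
    have : 0 ≤ κ * D ^ 2 := mul_nonneg hκ.le (sq_nonneg _)
    linarith
  have hFd : Differentiable ℝ F := hF.differentiable (by norm_num)
  have hF'd : Differentiable ℝ (fderiv ℝ F) :=
    (hF.fderiv_right (m := 1) (by norm_num)).differentiable (by norm_num)
  have hcd : ∀ t : ℝ, HasDerivAt (fun s : ℝ => w₂ + s • (w₁ - w₂)) (w₁ - w₂) t := by
    intro t
    simpa using ((hasDerivAt_id t).smul_const (w₁ - w₂)).const_add w₂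
  set c : ℝ → EuclideanSpace ℝ (Fin d') := fun s => w₂ + s • (w₁ - w₂) with hcdef
  have hg' : ∀ t : ℝ, HasDerivAt (fun s => F (c s)) (fderiv ℝ F (c t) (w₁ - w₂)) t :=
    fun t => (hFd (c t)).hasFDerivAt.comp_hasDerivAt t (hcd t)
  have hG' : ∀ t : ℝ, HasDerivAt (fun s => fderiv ℝ F (c s) (w₁ - w₂))
      (fderiv ℝ (fderiv ℝ F) (c t) (w₁ - w₂) (w₁ - w₂)) t := by
    intro t
    have h1 : HasFDerivAt (fun w : EuclideanSpace ℝ (Fin d') => (fderiv ℝ F w) (w₁ - w₂))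
        ((ContinuousLinearMap.apply ℝ ℝ (w₁ - w₂)).comp (fderiv ℝ (fderiv ℝ F) (c t))) (c t) :=
      (ContinuousLinearMap.apply ℝ ℝ (w₁ - w₂)).hasFDerivAt.comp (c t) (hF'd (c t)).hasFDerivAt
    exact h1.comp_hasDerivAt t (hcd t)
  have hHlb : ∀ t : ℝ, -(κ * F (c t) * ‖w₁ - w₂‖ ^ 2) ≤
      fderiv ℝ (fderiv ℝ F) (c t) (w₁ - w₂) (w₁ - w₂) := by
    intro t
    have := hSBWC (c t) (w₁ - w₂)
    rw [iteratedFDeriv_two_apply] at this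
    simpa using this
  have hgc : Continuous (fun s => F (c s)) :=
    hF.continuous.comp (continuous_const.add (continuous_id.smul continuous_const))
  obtain ⟨a, haI, hmax⟩ := isCompact_Icc.exists_isMaxOn (Set.nonempty_Icc.2 zero_le_one)
    hgc.continuousOn
  have hc0 : c 0 = w₂ := by simp [hcdef]
  have hc1 : c 1 = w₁ := by simp [hcdef]
  have hpt : α • w₁ + (1 - α) • w₂ = c α := by
    simp only [hcdef]
    module
  have hgα : F (c α) ≤ F (c a) := hmax hα
  have hmaxle : F (c a) ≤ max (F w₁) (F w₂) ∨
      (1 - κ * D ^ 2 / 2) * F (c a) ≤ max (F w₁) (F w₂) := by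
    rcases eq_or_lt_of_le haI.1 with h0 | h0
    · left; rw [← h0, hc0]; exact le_max_right _ _
    rcases eq_or_lt_of_le haI.2 with h1 | h1
    · left; rw [h1, hc1]; exact le_max_left _ _
    right
    -- interior maximum
    have hloc : IsLocalMax (fun s => F (c s)) a := hmax.isLocalMax (Icc_mem_nhds h0 h1)
    have hGa : fderiv ℝ F (c a) (w₁ - w₂) = 0 := by
      have := hloc.deriv_eq_zero
      rwa [(hg' a).deriv] at this
    have hC0 : 0 ≤ κ * F (c a) * D ^ 2 :=
      mul_nonneg (mul_nonneg hκ.le (hFnonneg _)) (sq_nonneg _)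
    have hkey := aux_line_max (fun s => F (c s)) (fun s => fderiv ℝ F (c s) (w₁ - w₂))
      (fun s => fderiv ℝ (fderiv ℝ F) (c s) (w₁ - w₂) (w₁ - w₂))
      (κ * F (c a) * D ^ 2) hC0 hg' hG' a ⟨h0, h1⟩ hGa ?_
    · have h0le : F (c 0) ≤ max (F w₁) (F w₂) := by rw [hc0]; exact le_max_right _ _
      nlinarith
    · intro t ht
      have h1 := hHlb t
      have hgt : F (c t) ≤ F (c a) := hmax ht
      have hgt0 : 0 ≤ F (c t) := hFnonneg _
      have hΔD : ‖w₁ - w₂‖ ≤ D := hD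
      have hΔ0 : (0:ℝ) ≤ ‖w₁ - w₂‖ := norm_nonneg _
      have hsq : ‖w₁ - w₂‖ ^ 2 ≤ D ^ 2 := by nlinarith
      have e1 := mul_le_mul_of_nonneg_left hsq (mul_nonneg hκ.le hgt0)
      have e2 := mul_le_mul_of_nonneg_right (mul_le_mul_of_nonneg_left hgt hκ.le) (sq_nonneg D)
      linarith
  rw [hpt, le_inv_mul_iff₀ hp]
  have hx0 : 0 ≤ F (c α) := hFnonneg _
  clear hG' hHlb hg' hgc hcd hmax hSBWC hF hFd hF'd hD hDκ hα haI hFnonneg hpt hc0 hc1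
  generalize F (c α) = x at *
  generalize F (c a) = y at *
  generalize max (F w₁) (F w₂) = m at *
  rcases hmaxle with h | h
  · nlinarith
  · have := mul_le_mul_of_nonneg_left hgα hp.le
    linarith
end

section
/- Fix arbitrary w_1, w_2 ∈ ℝ^{md}, any constant λ > 1, and suppose the width m satisfies √m ≥ λ·(L·R²/2)·‖w_1 − w_2‖². Then for every point v on the line segment [w_1, w_2], the empirical loss satisfies F̂(v) ≤ (1 − 1/λ)^{−1}·max{F̂(w_1), F̂(w_2)}. -/
open scoped BigOperators
open Set Finset

section Aux

lemma second_deriv_nonneg_of_convex {f : ℝ → ℝ} (hfconv : ConvexOn ℝ Set.univ f)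
    (h1 : Differentiable ℝ f) (h2 : Differentiable ℝ (deriv f)) (u : ℝ) :
    0 ≤ deriv (deriv f) u := by
  have hmono : Monotone (deriv f) := by
    have := hfconv.monotoneOn_deriv (fun x _ => h1 x)
    rwa [← monotoneOn_univ]
  have hd := (h2 u).hasDerivAt
  rw [hasDerivAt_iff_tendsto_slope] at hd
  have hd' : Filter.Tendsto (slope (deriv f) u) (nhdsWithin u (Ioi u))
      (nhds (deriv (deriv f) u)) :=
    hd.mono_left (nhdsWithin_mono u (fun y hy => ne_of_gt hy))
  refine ge_of_tendsto hd' ?_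
  filter_upwards [self_mem_nhdsWithin] with y hy
  rw [slope_def_field]
  exact div_nonneg (by linarith [hmono (le_of_lt hy)]) (by linarith [hy.out])

lemma quasi_key (g g1 g2 : ℝ → ℝ) (hg : ∀ t, HasDerivAt g (g1 t) t)
    (hg1 : ∀ t, HasDerivAt g1 (g2 t) t)
    (hnn : ∀ t, 0 ≤ g t) (ε : ℝ) (hε : 0 ≤ ε) (hε2 : ε ≤ 2)
    (hlow : ∀ t, -(ε * g t) ≤ g2 t) :
    ∀ t ∈ Set.Icc (0:ℝ) 1, (1 - ε/2) * g t ≤ max (g 0) (g 1) := by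
  have hgc : Continuous g := Differentiable.continuous (fun t => (hg t).differentiableAt)
  obtain ⟨t₀, ht₀, hmax⟩ :=
    isCompact_Icc.exists_isMaxOn (Set.nonempty_Icc.mpr zero_le_one) hgc.continuousOn
  set M := g t₀ with hMdef
  have hM0 : 0 ≤ M := hnn t₀
  have hle : ∀ t ∈ Icc (0:ℝ) 1, g t ≤ M := fun t ht => hmax ht
  set h : ℝ → ℝ := fun t => g t + ε * M / 2 * t ^ 2 with hh
  have hconv : ConvexOn ℝ (Icc (0:ℝ) 1) h := by
    apply convexOn_of_hasDerivWithinAt2_nonneg (convex_Icc 0 1)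
      (f' := fun t => g1 t + ε * M * t) (f'' := fun t => g2 t + ε * M)
    · exact (hgc.add (by continuity)).continuousOn
    · intro t _
      have : HasDerivAt h (g1 t + ε * M * t) t := by
        have hp : HasDerivAt (fun s : ℝ => ε * M / 2 * s ^ 2) (ε * M * t) t := by
          have := (hasDerivAt_pow 2 t).const_mul (ε * M / 2)
          exact this.congr_deriv (by rw [show (2:ℕ) - 1 = 1 from rfl]; ring)
        exact (hg t).add hp
      exact this.hasDerivWithinAt
    · intro t _
      have : HasDerivAt (fun t => g1 t + ε * M * t) (g2 t + ε * M) t := by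
        have hp : HasDerivAt (fun s : ℝ => ε * M * s) (ε * M) t := by
          simpa using (hasDerivAt_id t).const_mul (ε * M)
        exact (hg1 t).add hp
      exact this.hasDerivWithinAt
    · intro t ht
      have ht' : t ∈ Icc (0:ℝ) 1 := interior_subset ht
      have h1 : ε * g t ≤ ε * M := mul_le_mul_of_nonneg_left (hle t ht') hε
      linarith [hlow t]
  have ht₀seg : t₀ ∈ segment ℝ (0:ℝ) 1 := by rwa [segment_eq_Icc zero_le_one]
  have hmax' := hconv.le_on_segment (left_mem_Icc.mpr zero_le_one)
    (right_mem_Icc.mpr zero_le_one) ht₀seg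
  intro t ht
  have h1 : g t ≤ M := hle t ht
  have h2 : M + ε * M / 2 * t₀ ^ 2 ≤ max (g 0 + ε * M / 2 * 0 ^ 2) (g 1 + ε * M / 2 * 1 ^ 2) :=
    hmax'
  have h3 : max (g 0 + ε * M / 2 * 0 ^ 2) (g 1 + ε * M / 2 * 1 ^ 2)
      ≤ max (g 0) (g 1) + ε * M / 2 := by
    apply max_le
    · refine le_trans ?_ (le_add_of_nonneg_right (by positivity))
      simpa using le_max_left (g 0) (g 1)
    · have : g 1 + ε * M / 2 * 1 ^ 2 = g 1 + ε * M / 2 := by ring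
      rw [this]
      exact add_le_add_left (le_max_right _ _) _
  have h4 : 0 ≤ ε * M / 2 * t₀ ^ 2 := by positivity
  nlinarith [mul_le_mul_of_nonneg_left h1 (show (0:ℝ) ≤ 1 - ε/2 by linarith)]

/-- The path value `φ_i(t)`. -/
noncomputable def phiF {m n : ℕ} (sm : ℝ) (a : Fin m → ℝ) (σ : ℝ → ℝ) (y : Fin n → ℝ)
    (c b : Fin n → Fin m → ℝ) (i : Fin n) (t : ℝ) : ℝ :=
  y i * ((1 / sm) * ∑ j : Fin m, a j * σ (c i j + t * b i j))

/-- The first derivative `ψ_i(t)` (with `σ'` plugged in for the derivative of `σ`). -/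
noncomputable def psiF {m n : ℕ} (sm : ℝ) (a : Fin m → ℝ) (σ' : ℝ → ℝ) (y : Fin n → ℝ)
    (c b : Fin n → Fin m → ℝ) (i : Fin n) (t : ℝ) : ℝ :=
  y i * ((1 / sm) * ∑ j : Fin m, a j * (σ' (c i j + t * b i j) * b i j))

/-- The second derivative `χ_i(t)`. -/
noncomputable def chiF {m n : ℕ} (sm : ℝ) (a : Fin m → ℝ) (σ'' : ℝ → ℝ) (y : Fin n → ℝ)
    (c b : Fin n → Fin m → ℝ) (i : Fin n) (t : ℝ) : ℝ :=
  y i * ((1 / sm) * ∑ j : Fin m, a j * (σ'' (c i j + t * b i j) * b i j * b i j))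

lemma hasDerivAt_affine (c b t : ℝ) : HasDerivAt (fun α : ℝ => c + α * b) b t :=
  (hasDerivAt_mul_const b).const_add c

lemma hasDerivAt_phiF {m n : ℕ} (sm : ℝ) (a : Fin m → ℝ) {σ : ℝ → ℝ}
    (hσd1 : Differentiable ℝ σ) (y : Fin n → ℝ) (c b : Fin n → Fin m → ℝ) (i : Fin n) (t : ℝ) :
    HasDerivAt (phiF sm a σ y c b i) (psiF sm a (deriv σ) y c b i t) t := by
  have hsum : HasDerivAt (fun α : ℝ => ∑ j : Fin m, a j * σ (c i j + α * b i j))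
      (∑ j : Fin m, a j * (deriv σ (c i j + t * b i j) * b i j)) t := by
    apply HasDerivAt.fun_sum
    intro j _
    exact (((hσd1 _).hasDerivAt.comp t (hasDerivAt_affine (c i j) (b i j) t))).const_mul (a j)
  exact (hsum.const_mul (1 / sm)).const_mul (y i)

lemma hasDerivAt_psiF {m n : ℕ} (sm : ℝ) (a : Fin m → ℝ) {σ' : ℝ → ℝ}
    (hσd2 : Differentiable ℝ σ') (y : Fin n → ℝ) (c b : Fin n → Fin m → ℝ) (i : Fin n) (t : ℝ) :
    HasDerivAt (psiF sm a σ' y c b i) (chiF sm a (deriv σ') y c b i t) t := by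
  have hsum : HasDerivAt (fun α : ℝ => ∑ j : Fin m, a j * (σ' (c i j + α * b i j) * b i j))
      (∑ j : Fin m, a j * (deriv σ' (c i j + t * b i j) * b i j * b i j)) t := by
    apply HasDerivAt.fun_sum
    intro j _
    exact ((((hσd2 _).hasDerivAt.comp t
      (hasDerivAt_affine (c i j) (b i j) t))).mul_const (b i j)).const_mul (a j)
  exact (hsum.const_mul (1 / sm)).const_mul (y i)

lemma chiF_bound {m n : ℕ} {sm : ℝ} (hsm : 0 ≤ sm) {a : Fin m → ℝ} (ha : ∀ j, |a j| = 1)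
    {σ'' : ℝ → ℝ} {L : ℝ} (hL : 0 ≤ L) (hσ'' : ∀ u, |σ'' u| ≤ L)
    {y : Fin n → ℝ} (hy : ∀ i, |y i| = 1) (c b : Fin n → Fin m → ℝ)
    {K : ℝ} (hK : ∀ i, ∑ j : Fin m, b i j ^ 2 ≤ K) (i : Fin n) (t : ℝ) :
    |chiF sm a σ'' y c b i t| ≤ (1 / sm) * (L * K) := by
  rw [chiF, abs_mul, hy i, one_mul, abs_mul, abs_of_nonneg (by positivity : (0:ℝ) ≤ 1 / sm)]
  refine mul_le_mul_of_nonneg_left ?_ (by positivity)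
  calc |∑ j : Fin m, a j * (σ'' (c i j + t * b i j) * b i j * b i j)|
      ≤ ∑ j : Fin m, |a j * (σ'' (c i j + t * b i j) * b i j * b i j)| :=
        Finset.abs_sum_le_sum_abs _ _
    _ ≤ ∑ j : Fin m, L * b i j ^ 2 := by
        apply Finset.sum_le_sum
        intro j _
        rw [abs_mul, ha j, one_mul, abs_mul, abs_mul, mul_assoc, abs_mul_abs_self, ← sq]
        exact mul_le_mul_of_nonneg_right (hσ'' _) (sq_nonneg _)
    _ = L * ∑ j : Fin m, b i j ^ 2 := by rw [Finset.mul_sum]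
    _ ≤ L * K := mul_le_mul_of_nonneg_left (hK i) hL

/-- Main analytic step, abstracted. -/
lemma aux_net {m n : ℕ} (sm : ℝ) (hsm : 0 ≤ sm)
    (a : Fin m → ℝ) (ha : ∀ j, |a j| = 1)
    (σ : ℝ → ℝ) (hσd1 : Differentiable ℝ σ) (hσd2 : Differentiable ℝ (deriv σ))
    (L : ℝ) (hL : 0 ≤ L) (hσ'' : ∀ u, |deriv (deriv σ) u| ≤ L)
    (f : ℝ → ℝ) (hfd1 : Differentiable ℝ f) (hfd2 : Differentiable ℝ (deriv f))
    (hfconv : ConvexOn ℝ Set.univ f) (hfnonneg : ∀ u, 0 ≤ f u) (hfself : ∀ u, |deriv f u| ≤ f u)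
    (y : Fin n → ℝ) (hy : ∀ i, |y i| = 1)
    (c b : Fin n → Fin m → ℝ)
    (K : ℝ) (hK : ∀ i, ∑ j : Fin m, b i j ^ 2 ≤ K)
    (ε : ℝ) (hε : 0 ≤ ε) (hε2 : ε ≤ 2) (hεK : (1 / sm) * (L * K) ≤ ε) :
    ∀ t ∈ Set.Icc (0:ℝ) 1,
      (1 - ε/2) * ((1/(n:ℝ)) * ∑ i : Fin n, f (phiF sm a σ y c b i t))
        ≤ max ((1/(n:ℝ)) * ∑ i : Fin n, f (phiF sm a σ y c b i 0))
            ((1/(n:ℝ)) * ∑ i : Fin n, f (phiF sm a σ y c b i 1)) := by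
  set G : ℝ → ℝ := fun t => (1/(n:ℝ)) * ∑ i : Fin n, f (phiF sm a σ y c b i t) with hG
  set G1 : ℝ → ℝ := fun t => (1/(n:ℝ)) * ∑ i : Fin n,
    deriv f (phiF sm a σ y c b i t) * psiF sm a (deriv σ) y c b i t with hG1
  set G2 : ℝ → ℝ := fun t => (1/(n:ℝ)) * ∑ i : Fin n,
    (deriv (deriv f) (phiF sm a σ y c b i t) * psiF sm a (deriv σ) y c b i t
        * psiF sm a (deriv σ) y c b i t
      + deriv f (phiF sm a σ y c b i t) * chiF sm a (deriv (deriv σ)) y c b i t) with hG2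
  have hGd : ∀ t, HasDerivAt G (G1 t) t := by
    intro t
    apply HasDerivAt.const_mul
    apply HasDerivAt.fun_sum
    intro i _
    exact (hfd1 _).hasDerivAt.comp t (hasDerivAt_phiF sm a hσd1 y c b i t)
  have hG1d : ∀ t, HasDerivAt G1 (G2 t) t := by
    intro t
    apply HasDerivAt.const_mul
    apply HasDerivAt.fun_sum
    intro i _
    exact ((hfd2 _).hasDerivAt.comp t (hasDerivAt_phiF sm a hσd1 y c b i t)).mul
      (hasDerivAt_psiF sm a hσd2 y c b i t)
  have hGnn : ∀ t, 0 ≤ G t := by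
    intro t
    exact mul_nonneg (by positivity) (Finset.sum_nonneg fun i _ => hfnonneg _)
  have hlow : ∀ t, -(ε * G t) ≤ G2 t := by
    intro t
    have key : G2 t + ε * G t = (1/(n:ℝ)) * ∑ i : Fin n,
        ((deriv (deriv f) (phiF sm a σ y c b i t) * psiF sm a (deriv σ) y c b i t
            * psiF sm a (deriv σ) y c b i t
          + deriv f (phiF sm a σ y c b i t) * chiF sm a (deriv (deriv σ)) y c b i t)
          + ε * f (phiF sm a σ y c b i t)) := by
      rw [hG2, hG]
      simp only [Finset.mul_sum]
      rw [← Finset.sum_add_distrib]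
      apply Finset.sum_congr rfl
      intro i _
      ring
    have hterm : ∀ i : Fin n, 0 ≤
        (deriv (deriv f) (phiF sm a σ y c b i t) * psiF sm a (deriv σ) y c b i t
            * psiF sm a (deriv σ) y c b i t
          + deriv f (phiF sm a σ y c b i t) * chiF sm a (deriv (deriv σ)) y c b i t)
          + ε * f (phiF sm a σ y c b i t) := by
      intro i
      have hA : 0 ≤ deriv (deriv f) (phiF sm a σ y c b i t) :=
        second_deriv_nonneg_of_convex hfconv hfd1 hfd2 _
      have h1 : 0 ≤ deriv (deriv f) (phiF sm a σ y c b i t) * psiF sm a (deriv σ) y c b i t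
          * psiF sm a (deriv σ) y c b i t := by
        rw [mul_assoc]
        exact mul_nonneg hA (mul_self_nonneg _)
      have h2 : |deriv f (phiF sm a σ y c b i t) * chiF sm a (deriv (deriv σ)) y c b i t|
          ≤ f (phiF sm a σ y c b i t) * ε := by
        rw [abs_mul]
        exact mul_le_mul (hfself _) (le_trans (chiF_bound hsm ha hL hσ'' hy c b hK i t) hεK)
          (abs_nonneg _) (hfnonneg _)
      nlinarith [neg_abs_le (deriv f (phiF sm a σ y c b i t)
        * chiF sm a (deriv (deriv σ)) y c b i t)]
    have : 0 ≤ G2 t + ε * G t := by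
      rw [key]
      exact mul_nonneg (by positivity) (Finset.sum_nonneg fun i _ => hterm i)
    linarith
  exact quasi_key G G1 G2 hGd hG1d hGnn ε hε hε2 hlow

end Aux

/-- generalized local quasi-convexity of sufficiently wide neural nets. -/
theorem GLQC_of_wide_neural_nets
    {m d n : ℕ} (ℓ L R : ℝ)
    (a : Fin m → ℝ) (ha : ∀ j, a j = 1 ∨ a j = -1)
    (σ : ℝ → ℝ) (hσ : ContDiff ℝ 2 σ)
    (hσ' : ∀ u, |deriv σ u| ≤ ℓ) (hσ'' : ∀ u, |deriv (deriv σ) u| ≤ L)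
    (f : ℝ → ℝ) (hf : ContDiff ℝ 2 f) (hfconv : ConvexOn ℝ Set.univ f)
    (hfnonneg : ∀ u, 0 ≤ f u) (hfself : ∀ u, |deriv f u| ≤ f u)
    (x : Fin n → EuclideanSpace ℝ (Fin d)) (y : Fin n → ℝ)
    (hx : ∀ i, ‖x i‖ ≤ R) (hy : ∀ i, y i = 1 ∨ y i = -1)
    (w₁ w₂ : EuclideanSpace ℝ (Fin m × Fin d))
    (lam : ℝ) (hlam : 1 < lam)
    (hm : lam * (L * R ^ 2 / 2) * ‖w₁ - w₂‖ ^ 2 ≤ Real.sqrt m) :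
    ∀ α : ℝ, α ∈ Set.Icc (0 : ℝ) 1 →
      empLoss a σ f x y (α • w₁ + (1 - α) • w₂)
        ≤ (1 - 1 / lam)⁻¹ * max (empLoss a σ f x y w₁) (empLoss a σ f x y w₂) := by
  intro α hα
  have hlam0 : (0:ℝ) < lam := lt_trans one_pos hlam
  set sm := Real.sqrt (m : ℝ) with hsmdef
  have hsm : 0 ≤ sm := Real.sqrt_nonneg _
  set c : Fin n → Fin m → ℝ := fun i j => ∑ k : Fin d, w₂ (j, k) * x i k with hc
  set b : Fin n → Fin m → ℝ := fun i j => ∑ k : Fin d, (w₁ - w₂) (j, k) * x i k with hb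
  -- differentiability
  rw [show (2 : WithTop ℕ∞) = 1 + 1 from by norm_num] at hσ hf
  obtain ⟨hσd1, -, hσc1⟩ := contDiff_succ_iff_deriv.mp hσ
  have hσd2 : Differentiable ℝ (deriv σ) := hσc1.differentiable one_ne_zero
  obtain ⟨hfd1, -, hfc1⟩ := contDiff_succ_iff_deriv.mp hf
  have hfd2 : Differentiable ℝ (deriv f) := hfc1.differentiable one_ne_zero
  have hL : 0 ≤ L := le_trans (abs_nonneg _) (hσ'' 0)
  have ha' : ∀ j, |a j| = 1 := fun j => by rcases ha j with h | h <;> simp [h]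
  have hy' : ∀ i, |y i| = 1 := fun i => by rcases hy i with h | h <;> simp [h]
  -- bound on the b-sums
  have hxs : ∀ i, ∑ k : Fin d, x i k ^ 2 ≤ R ^ 2 := by
    intro i
    have h1 : ∑ k : Fin d, x i k ^ 2 = ‖x i‖ ^ 2 := by
      rw [EuclideanSpace.norm_eq, Real.sq_sqrt (Finset.sum_nonneg fun k _ => sq_nonneg _)]
      simp [Real.norm_eq_abs, sq_abs]
    rw [h1]
    exact pow_le_pow_left₀ (norm_nonneg _) (hx i) 2
  have hδ : ∑ j : Fin m, ∑ k : Fin d, ((w₁ - w₂) (j, k)) ^ 2 = ‖w₁ - w₂‖ ^ 2 := by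
    rw [EuclideanSpace.norm_eq, Real.sq_sqrt (Finset.sum_nonneg fun p _ => sq_nonneg _)]
    rw [Fintype.sum_prod_type]
    simp [Real.norm_eq_abs, sq_abs]
  have hK : ∀ i, ∑ j : Fin m, b i j ^ 2 ≤ R ^ 2 * ‖w₁ - w₂‖ ^ 2 := by
    intro i
    calc ∑ j : Fin m, b i j ^ 2
        ≤ ∑ j : Fin m, (∑ k : Fin d, ((w₁ - w₂) (j, k)) ^ 2) * (∑ k : Fin d, x i k ^ 2) := by
          apply Finset.sum_le_sum
          intro j _
          simp only [hb]
          exact Finset.sum_mul_sq_le_sq_mul_sq _ _ _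
      _ ≤ ∑ j : Fin m, (∑ k : Fin d, ((w₁ - w₂) (j, k)) ^ 2) * R ^ 2 :=
          Finset.sum_le_sum fun j _ => mul_le_mul_of_nonneg_left (hxs i)
            (Finset.sum_nonneg fun k _ => sq_nonneg _)
      _ = R ^ 2 * ∑ j : Fin m, ∑ k : Fin d, ((w₁ - w₂) (j, k)) ^ 2 := by
          rw [← Finset.sum_mul, mul_comm]
      _ = R ^ 2 * ‖w₁ - w₂‖ ^ 2 := by rw [hδ]
  set K : ℝ := R ^ 2 * ‖w₁ - w₂‖ ^ 2 with hKdef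
  have hKnn : 0 ≤ K := by positivity
  set ε : ℝ := (1 / sm) * (L * K) with hεdef
  have hε0 : 0 ≤ ε := mul_nonneg (div_nonneg zero_le_one hsm) (mul_nonneg hL hKnn)
  have hεlam : ε ≤ 2 / lam := by
    rcases eq_or_lt_of_le hsm with h0 | hpos
    · rw [hεdef, ← h0]
      simp
      positivity
    · have e1 : ε = (L * K) / sm := by rw [hεdef]; ring
      rw [e1, div_le_div_iff₀ hpos hlam0]
      have e2 : L * K * lam = 2 * (lam * (L * R ^ 2 / 2) * ‖w₁ - w₂‖ ^ 2) := by
        rw [hKdef]; ring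
      rw [e2]
      linarith [hm]
  have hε2 : ε ≤ 2 := le_trans hεlam (div_le_self (by norm_num) (le_of_lt hlam))
  -- pointwise identification with phiF
  have hpoint : ∀ β : ℝ, empLoss a σ f x y (β • w₁ + (1 - β) • w₂)
      = (1/(n:ℝ)) * ∑ i : Fin n, f (phiF sm a σ y c b i β) := by
    intro β
    rw [empLoss]
    congr 1
    apply Finset.sum_congr rfl
    intro i _
    have harg : ∀ j : Fin m,
        (∑ k : Fin d, (β • w₁ + (1 - β) • w₂) (j, k) * x i k) = c i j + β * b i j := by
      intro j
      simp only [hc, hb, PiLp.add_apply, PiLp.smul_apply, PiLp.sub_apply, smul_eq_mul]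
      rw [Finset.mul_sum, ← Finset.sum_add_distrib]
      exact Finset.sum_congr rfl fun k _ => by ring
    rw [Phi, phiF]
    simp only [harg]
    rfl
  -- main inequality from aux_net
  have main := aux_net sm hsm a ha' σ hσd1 hσd2 L hL hσ'' f hfd1 hfd2 hfconv hfnonneg hfself
    y hy' c b K hK ε hε0 hε2 le_rfl α hα
  have hw₁ : empLoss a σ f x y w₁ = (1/(n:ℝ)) * ∑ i : Fin n, f (phiF sm a σ y c b i 1) := by
    have : w₁ = (1:ℝ) • w₁ + (1 - 1 : ℝ) • w₂ := by simp
    rw [this, ← hpoint 1]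
  have hw₂ : empLoss a σ f x y w₂ = (1/(n:ℝ)) * ∑ i : Fin n, f (phiF sm a σ y c b i 0) := by
    have : w₂ = (0:ℝ) • w₁ + (1 - 0 : ℝ) • w₂ := by simp
    rw [this, ← hpoint 0]
  rw [hpoint α, hw₁, hw₂]
  set Gα := (1/(n:ℝ)) * ∑ i : Fin n, f (phiF sm a σ y c b i α) with hGα
  set G0 := (1/(n:ℝ)) * ∑ i : Fin n, f (phiF sm a σ y c b i 0) with hG0
  set G1 := (1/(n:ℝ)) * ∑ i : Fin n, f (phiF sm a σ y c b i 1) with hG1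
  have hGαnn : 0 ≤ Gα :=
    mul_nonneg (by positivity) (Finset.sum_nonneg fun i _ => hfnonneg _)
  have hpos : (0:ℝ) < 1 - 1 / lam := by
    rw [sub_pos, div_lt_one hlam0]
    exact hlam
  have hstep : (1 - 1/lam) * Gα ≤ max G1 G0 := by
    have h1 : (1 - 1/lam) * Gα ≤ (1 - ε/2) * Gα := by
      apply mul_le_mul_of_nonneg_right _ hGαnn
      have h2 : (2:ℝ) / lam / 2 = 1 / lam := by ring
      linarith [hεlam]
    rw [max_comm]
    exact le_trans h1 main
  calc Gα = (1 - 1/lam)⁻¹ * ((1 - 1/lam) * Gα) :=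
        (inv_mul_cancel_left₀ (ne_of_gt hpos) Gα).symm
    _ ≤ (1 - 1/lam)⁻¹ * max G1 G0 :=
        mul_le_mul_of_nonneg_left hstep (inv_nonneg.mpr hpos.le)
end

section
/- (Expansiveness for self-bounded losses.) Suppose the loss is 1-smooth (f''(u) ≤ 1) and self-bounded (|f'(u)| ≤ f(u)). Then for any step size η ≤ 1/(ℓ²R²) and any w, w' ∈ ℝ^{md}, writing w_α := αw + (1−α)w', ‖(w − η∇F̂(w)) − (w' − η∇F̂(w'))‖ ≤ (1 + η·(LR²/√m)·max_{α∈[0,1]} F̂(w_α))·‖w − w'‖. -/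
open scoped BigOperators

noncomputable def Bv {m d n : ℕ} (x : Fin n → EuclideanSpace ℝ (Fin d)) (s : Fin n) (j : Fin m) :
    EuclideanSpace ℝ (Fin m × Fin d) := WithLp.toLp 2 (fun p => if p.1 = j then x s p.2 else 0)

lemma inner_Bv {m d n : ℕ} (x : Fin n → EuclideanSpace ℝ (Fin d)) (s : Fin n) (j : Fin m)
    (v : EuclideanSpace ℝ (Fin m × Fin d)) :
    (inner ℝ (Bv x s j) v : ℝ) = ∑ i : Fin d, v (j, i) * x s i := by
  rw [PiLp.inner_apply, Fintype.sum_prod_type]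
  simp [Bv, mul_comm]

-- empLoss written via inner products
lemma empLoss_eq {m d n : ℕ} (a : Fin m → ℝ) (σ f : ℝ → ℝ)
    (x : Fin n → EuclideanSpace ℝ (Fin d)) (y : Fin n → ℝ)
    (w : EuclideanSpace ℝ (Fin m × Fin d)) :
    empLoss a σ f x y w = (1/(n:ℝ)) * ∑ s : Fin n,
      f (y s * (1 / Real.sqrt m) * ∑ j : Fin m, a j * σ (inner ℝ (Bv x s j) w : ℝ)) := by
  simp only [empLoss, Phi, inner_Bv, mul_assoc]

noncomputable def gradCoef {m d n : ℕ} (a : Fin m → ℝ) (σ f : ℝ → ℝ)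
    (x : Fin n → EuclideanSpace ℝ (Fin d)) (y : Fin n → ℝ)
    (w : EuclideanSpace ℝ (Fin m × Fin d)) (s : Fin n) (j : Fin m) : ℝ :=
  (1/(n:ℝ)) * deriv f (y s * Phi a σ w (x s)) *
    (y s * (1 / Real.sqrt m) * a j * deriv σ (inner ℝ (Bv x s j) w : ℝ))

noncomputable def gradEmp {m d n : ℕ} (a : Fin m → ℝ) (σ f : ℝ → ℝ)
    (x : Fin n → EuclideanSpace ℝ (Fin d)) (y : Fin n → ℝ)
    (w : EuclideanSpace ℝ (Fin m × Fin d)) : EuclideanSpace ℝ (Fin m × Fin d) :=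
  ∑ s : Fin n, ∑ j : Fin m, gradCoef a σ f x y w s j • Bv x s j

lemma z_eq {m d n : ℕ} (a : Fin m → ℝ) (σ : ℝ → ℝ)
    (x : Fin n → EuclideanSpace ℝ (Fin d)) (y : Fin n → ℝ)
    (w : EuclideanSpace ℝ (Fin m × Fin d)) (s : Fin n) :
    y s * Phi a σ w (x s)
      = y s * (1 / Real.sqrt m) * ∑ j : Fin m, a j * σ (inner ℝ (Bv x s j) w : ℝ) := by
  simp only [Phi, inner_Bv, mul_assoc]

lemma hasGradientAt_empLoss {m d n : ℕ} (a : Fin m → ℝ) (σ f : ℝ → ℝ)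
    (hσ : ContDiff ℝ 2 σ) (hf : ContDiff ℝ 2 f)
    (x : Fin n → EuclideanSpace ℝ (Fin d)) (y : Fin n → ℝ)
    (w : EuclideanSpace ℝ (Fin m × Fin d)) :
    HasGradientAt (empLoss a σ f x y) (gradEmp a σ f x y w) w := by
  have hσd : Differentiable ℝ σ := hσ.differentiable (by norm_num)
  have hfd : Differentiable ℝ f := hf.differentiable (by norm_num)
  rw [hasGradientAt_iff_hasFDerivAt]
  have key : HasFDerivAt (empLoss a σ f x y)
      (∑ s : Fin n, ∑ j : Fin m, gradCoef a σ f x y w s j • (innerSL ℝ (Bv x s j))) w := by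
    have h1 : ∀ s : Fin n, HasFDerivAt
        (fun v : EuclideanSpace ℝ (Fin m × Fin d) =>
          f (y s * (1 / Real.sqrt m) * ∑ j : Fin m, a j * σ (inner ℝ (Bv x s j) v : ℝ)))
        ((deriv f (y s * (1 / Real.sqrt m) * ∑ j : Fin m, a j * σ (inner ℝ (Bv x s j) w : ℝ))) •
          ((y s * (1 / Real.sqrt m)) •
            ∑ j : Fin m, (a j * deriv σ (inner ℝ (Bv x s j) w : ℝ)) • innerSL ℝ (Bv x s j))) w := by
      intro s
      have hin : ∀ j : Fin m, HasFDerivAt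
          (fun v : EuclideanSpace ℝ (Fin m × Fin d) => a j * σ (inner ℝ (Bv x s j) v : ℝ))
          ((a j * deriv σ (inner ℝ (Bv x s j) w : ℝ)) • innerSL ℝ (Bv x s j)) w := by
        intro j
        have := ((hσd (inner ℝ (Bv x s j) w : ℝ)).hasDerivAt).comp_hasFDerivAt w
          ((innerSL ℝ (Bv x s j)).hasFDerivAt)
        simpa [mul_smul] using this.const_mul (a j)
      have hsum := HasFDerivAt.fun_sum (fun j (_ : j ∈ Finset.univ) => hin j)
      have hmul := hsum.const_mul (y s * (1 / Real.sqrt m))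
      exact ((hfd _).hasDerivAt).comp_hasFDerivAt w hmul
    have hsum := HasFDerivAt.fun_sum (fun s (_ : s ∈ Finset.univ) => h1 s)
    have hfin := hsum.const_mul (1/(n:ℝ))
    have heq : (empLoss a σ f x y) = fun v => (1/(n:ℝ)) * ∑ s : Fin n,
        f (y s * (1 / Real.sqrt m) * ∑ j : Fin m, a j * σ (inner ℝ (Bv x s j) v : ℝ)) := by
      funext v; exact empLoss_eq a σ f x y v
    rw [heq]
    refine hfin.congr_fderiv (Eq.symm ?_)
    rw [Finset.smul_sum]
    refine Finset.sum_congr rfl fun s _ => ?_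
    rw [Finset.smul_sum, Finset.smul_sum, Finset.smul_sum]
    refine Finset.sum_congr rfl fun j _ => ?_
    simp only [smul_smul]
    congr 1
    rw [gradCoef, z_eq]
    ring
  refine key.congr_fderiv (Eq.symm ?_)
  refine ContinuousLinearMap.ext fun v => ?_
  simp only [InnerProductSpace.toDual_apply_apply, gradEmp, sum_inner, real_inner_smul_left,
    ContinuousLinearMap.sum_apply, ContinuousLinearMap.smul_apply, innerSL_apply_apply,
    smul_eq_mul]

section Line
variable {m d n : ℕ} (a : Fin m → ℝ) (σ f : ℝ → ℝ)
  (x : Fin n → EuclideanSpace ℝ (Fin d)) (y : Fin n → ℝ)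
  (w' u : EuclideanSpace ℝ (Fin m × Fin d))

noncomputable def lineW (t : ℝ) : EuclideanSpace ℝ (Fin m × Fin d) := w' + t • u

noncomputable def zfun (s : Fin n) (t : ℝ) : ℝ := y s * Phi a σ (lineW w' u t) (x s)

noncomputable def gvec (t : ℝ) (s : Fin n) : EuclideanSpace ℝ (Fin m × Fin d) :=
  ∑ j : Fin m, (y s * (1 / Real.sqrt m) * a j
      * deriv σ (inner ℝ (Bv x s j) (lineW w' u t) : ℝ)) • Bv x s j

noncomputable def Pvec (t : ℝ) : EuclideanSpace ℝ (Fin m × Fin d) :=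
  ∑ s : Fin n, ((1/(n:ℝ)) * deriv (deriv f) (zfun a σ x y w' u s t)
      * (inner ℝ (gvec a σ x y w' u t s) u : ℝ)) • gvec a σ x y w' u t s

noncomputable def Qvec (t : ℝ) : EuclideanSpace ℝ (Fin m × Fin d) :=
  ∑ s : Fin n, ∑ j : Fin m, ((1/(n:ℝ)) * deriv f (zfun a σ x y w' u s t)
      * (y s * (1 / Real.sqrt m) * a j)
      * deriv (deriv σ) (inner ℝ (Bv x s j) (lineW w' u t) : ℝ)
      * (inner ℝ (Bv x s j) u : ℝ)) • Bv x s j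

lemma hasDerivAt_inner_line (s : Fin n) (j : Fin m) (t : ℝ) :
    HasDerivAt (fun t => (inner ℝ (Bv x s j) (lineW w' u t) : ℝ)) (inner ℝ (Bv x s j) u : ℝ) t := by
  have heq : (fun t => (inner ℝ (Bv x s j) (lineW w' u t) : ℝ))
      = fun t => (inner ℝ (Bv x s j) w' : ℝ) + t * (inner ℝ (Bv x s j) u : ℝ) := by
    funext t
    rw [lineW, inner_add_right, real_inner_smul_right]
  rw [heq]
  simpa using ((hasDerivAt_id t).mul_const (inner ℝ (Bv x s j) u : ℝ)).const_add (inner ℝ (Bv x s j) w' : ℝ)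

lemma inner_gvec_u (t : ℝ) (s : Fin n) :
    (inner ℝ (gvec a σ x y w' u t s) u : ℝ)
      = ∑ j : Fin m, (y s * (1 / Real.sqrt m) * a j
          * deriv σ (inner ℝ (Bv x s j) (lineW w' u t) : ℝ)) * (inner ℝ (Bv x s j) u : ℝ) := by
  simp only [gvec, sum_inner, real_inner_smul_left]

lemma hasDerivAt_zfun (hσ : ContDiff ℝ 2 σ) (s : Fin n) (t : ℝ) :
    HasDerivAt (zfun a σ x y w' u s) (inner ℝ (gvec a σ x y w' u t s) u : ℝ) t := by
  have hσd : Differentiable ℝ σ := hσ.differentiable (by norm_num)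
  have heq : zfun a σ x y w' u s = fun t => y s * (1 / Real.sqrt m)
      * ∑ j : Fin m, a j * σ (inner ℝ (Bv x s j) (lineW w' u t) : ℝ) := by
    funext t; exact z_eq a σ x y (lineW w' u t) s
  rw [heq]
  have hj : ∀ j : Fin m, HasDerivAt
      (fun t => a j * σ (inner ℝ (Bv x s j) (lineW w' u t) : ℝ))
      (a j * (deriv σ (inner ℝ (Bv x s j) (lineW w' u t) : ℝ) * (inner ℝ (Bv x s j) u : ℝ))) t := by
    intro j
    exact (((hσd _).hasDerivAt).comp t (hasDerivAt_inner_line x w' u s j t)).const_mul (a j)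
  have hsum := HasDerivAt.fun_sum (fun j (_ : j ∈ Finset.univ) => hj j)
  have := hsum.const_mul (y s * (1 / Real.sqrt m))
  refine this.congr_deriv (Eq.symm ?_)
  rw [inner_gvec_u, Finset.mul_sum]
  exact Finset.sum_congr rfl fun j _ => by ring

end Line

lemma deriv_differentiable_of_contDiff2 {g : ℝ → ℝ} (hg : ContDiff ℝ 2 g) :
    Differentiable ℝ (deriv g) := by
  have h2 : (2 : WithTop ℕ∞) = 1 + 1 := by norm_num
  rw [h2, contDiff_succ_iff_deriv] at hg
  exact hg.2.2.differentiable (by norm_num)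

section Line2
variable {m d n : ℕ} (a : Fin m → ℝ) (σ f : ℝ → ℝ)
  (x : Fin n → EuclideanSpace ℝ (Fin d)) (y : Fin n → ℝ)
  (w' u : EuclideanSpace ℝ (Fin m × Fin d))

lemma hasDerivAt_gradEmp_line (hσ : ContDiff ℝ 2 σ) (hf : ContDiff ℝ 2 f) (t : ℝ) :
    HasDerivAt (fun t => gradEmp a σ f x y (lineW w' u t))
      (Pvec a σ f x y w' u t + Qvec a σ f x y w' u t) t := by
  have hσd : Differentiable ℝ σ := hσ.differentiable (by norm_num)
  have hfd : Differentiable ℝ f := hf.differentiable (by norm_num)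
  have hσd2 := deriv_differentiable_of_contDiff2 hσ
  have hfd2 := deriv_differentiable_of_contDiff2 hf
  -- derivative of each coefficient
  have hcoef : ∀ (s : Fin n) (j : Fin m),
      HasDerivAt (fun t => gradCoef a σ f x y (lineW w' u t) s j)
        ((1/(n:ℝ)) * deriv (deriv f) (zfun a σ x y w' u s t)
            * (inner ℝ (gvec a σ x y w' u t s) u : ℝ)
            * (y s * (1 / Real.sqrt m) * a j
              * deriv σ (inner ℝ (Bv x s j) (lineW w' u t) : ℝ))
          + (1/(n:ℝ)) * deriv f (zfun a σ x y w' u s t)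
            * (y s * (1 / Real.sqrt m) * a j)
            * deriv (deriv σ) (inner ℝ (Bv x s j) (lineW w' u t) : ℝ)
            * (inner ℝ (Bv x s j) u : ℝ)) t := by
    intro s j
    have h1 : HasDerivAt (fun t => deriv f (zfun a σ x y w' u s t))
        (deriv (deriv f) (zfun a σ x y w' u s t) * (inner ℝ (gvec a σ x y w' u t s) u : ℝ)) t :=
      ((hfd2 _).hasDerivAt).comp t (hasDerivAt_zfun a σ x y w' u hσ s t)
    have h2 : HasDerivAt (fun t => deriv σ (inner ℝ (Bv x s j) (lineW w' u t) : ℝ))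
        (deriv (deriv σ) (inner ℝ (Bv x s j) (lineW w' u t) : ℝ) * (inner ℝ (Bv x s j) u : ℝ)) t :=
      ((hσd2 _).hasDerivAt).comp t (hasDerivAt_inner_line x w' u s j t)
    have h3 := (h1.const_mul (1/(n:ℝ))).mul
      ((h2.const_mul (y s * (1 / Real.sqrt m) * a j)))
    have heq : (fun t => gradCoef a σ f x y (lineW w' u t) s j)
        = fun t => ((1/(n:ℝ)) * deriv f (zfun a σ x y w' u s t))
            * (y s * (1 / Real.sqrt m) * a j
                * deriv σ (inner ℝ (Bv x s j) (lineW w' u t) : ℝ)) := by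
      funext t
      rw [gradCoef]
      rfl
    rw [heq]
    refine h3.congr_deriv (Eq.symm ?_)
    ring
  have hterm : ∀ (s : Fin n) (j : Fin m),
      HasDerivAt (fun t => gradCoef a σ f x y (lineW w' u t) s j • Bv x s j)
        (((1/(n:ℝ)) * deriv (deriv f) (zfun a σ x y w' u s t)
            * (inner ℝ (gvec a σ x y w' u t s) u : ℝ)
            * (y s * (1 / Real.sqrt m) * a j
              * deriv σ (inner ℝ (Bv x s j) (lineW w' u t) : ℝ))
          + (1/(n:ℝ)) * deriv f (zfun a σ x y w' u s t)
            * (y s * (1 / Real.sqrt m) * a j)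
            * deriv (deriv σ) (inner ℝ (Bv x s j) (lineW w' u t) : ℝ)
            * (inner ℝ (Bv x s j) u : ℝ)) • Bv x s j) t :=
    fun s j => (hcoef s j).smul_const (Bv x s j)
  have hsum := HasDerivAt.fun_sum (fun s (_ : s ∈ Finset.univ) =>
    HasDerivAt.fun_sum (fun j (_ : j ∈ Finset.univ) => hterm s j))
  have heq2 : (fun t => gradEmp a σ f x y (lineW w' u t))
      = fun t => ∑ s : Fin n, ∑ j : Fin m,
          gradCoef a σ f x y (lineW w' u t) s j • Bv x s j := by
    funext t; rw [gradEmp]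
  rw [heq2]
  refine hsum.congr_deriv (Eq.symm ?_)
  rw [Pvec, Qvec, ← Finset.sum_add_distrib]
  refine Finset.sum_congr rfl fun s _ => ?_
  conv_lhs => rw [gvec, Finset.smul_sum]
  rw [← Finset.sum_add_distrib]
  refine Finset.sum_congr rfl fun j _ => ?_
  rw [smul_smul, ← add_smul]
  congr 1
end Line2

lemma second_deriv_nonneg_of_convex_s11 {f : ℝ → ℝ} (hf : ContDiff ℝ 2 f)
    (hconv : ConvexOn ℝ Set.univ f) (u : ℝ) : 0 ≤ deriv (deriv f) u := by
  have hfd : Differentiable ℝ f := hf.differentiable (by norm_num)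
  have hmono : Monotone (deriv f) := by
    have := hconv.monotoneOn_deriv (fun z _ => hfd z)
    intro s t hst
    exact this (Set.mem_univ s) (Set.mem_univ t) hst
  have hd2 := (deriv_differentiable_of_contDiff2 hf u).hasDerivAt
  -- derivative of a monotone function is nonnegative
  have h := hd2.hasDerivWithinAt (s := Set.Ioi u)
  rw [hasDerivWithinAt_iff_tendsto_slope] at h
  have hdiff : Set.Ioi u \ {u} = Set.Ioi u := by
    ext z; simp (config := {contextual := true}) [lt_iff_le_and_ne, ne_of_gt]
  rw [hdiff] at h
  refine le_of_tendsto_of_tendsto tendsto_const_nhds h ?_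
  filter_upwards [self_mem_nhdsWithin] with z hz
  rw [slope_def_field]
  have hz' : u < z := hz
  have : deriv f u ≤ deriv f z := hmono hz'.le
  exact div_nonneg (by linarith) (by linarith)

section Bounds
variable {m d n : ℕ} (a : Fin m → ℝ) (σ f : ℝ → ℝ)
  (x : Fin n → EuclideanSpace ℝ (Fin d)) (y : Fin n → ℝ)
  (w' u : EuclideanSpace ℝ (Fin m × Fin d))

lemma norm_sq_eq_sum {ι : Type*} [Fintype ι] (v : EuclideanSpace ℝ ι) :
    ‖v‖^2 = ∑ p, (v p)^2 := by
  rw [← real_inner_self_eq_norm_sq, PiLp.inner_apply]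
  simp [RCLike.inner_apply, sq]

lemma sum_apply' {ι κ : Type*} [Fintype ι] [Fintype κ] (v : κ → EuclideanSpace ℝ ι) (p : ι) :
    (∑ s : κ, v s) p = ∑ s : κ, v s p :=
  by rw [WithLp.ofLp_sum, Finset.sum_apply]

lemma Bv_apply (s : Fin n) (j : Fin m) (p : Fin m × Fin d) :
    Bv x s j p = if p.1 = j then x s p.2 else 0 := rfl

lemma mc_sq_le_one (m : ℕ) : (m : ℝ) * (1 / Real.sqrt m)^2 ≤ 1 := by
  rcases Nat.eq_zero_or_pos m with h | h
  · simp [h]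
  · have hm : (0:ℝ) < m := by exact_mod_cast h
    rw [div_pow, one_pow, Real.sq_sqrt hm.le]
    rw [mul_one_div, div_self hm.ne']

/-- norm of gvec is at most ℓ * R -/
lemma norm_gvec_sq_le (ℓ R : ℝ) (ha : ∀ j, a j = 1 ∨ a j = -1)
    (hσ' : ∀ v, |deriv σ v| ≤ ℓ) (hx : ∀ i, ‖x i‖ ≤ R) (hy : ∀ i, y i = 1 ∨ y i = -1)
    (t : ℝ) (s : Fin n) :
    ‖gvec a σ x y w' u t s‖^2 ≤ ℓ^2 * R^2 := by
  have hl : 0 ≤ ℓ := le_trans (abs_nonneg _) (hσ' 0)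
  have hgent : ∀ p : Fin m × Fin d, gvec a σ x y w' u t s p
      = (y s * (1 / Real.sqrt m) * a p.1
          * deriv σ (inner ℝ (Bv x s p.1) (lineW w' u t) : ℝ)) * x s p.2 := by
    intro p
    rw [gvec, sum_apply']
    have : ∀ j : Fin m, ((y s * (1 / Real.sqrt m) * a j
        * deriv σ (inner ℝ (Bv x s j) (lineW w' u t) : ℝ)) • Bv x s j) p
        = (if p.1 = j then (y s * (1 / Real.sqrt m) * a j
            * deriv σ (inner ℝ (Bv x s j) (lineW w' u t) : ℝ)) * x s p.2 else 0) := by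
      intro j
      show (y s * (1 / Real.sqrt m) * a j * deriv σ (inner ℝ (Bv x s j) (lineW w' u t) : ℝ))
          * Bv x s j p = _
      rw [Bv_apply]
      split <;> simp
    rw [Finset.sum_congr rfl fun j (_ : j ∈ Finset.univ) => this j, Finset.sum_ite_eq Finset.univ p.1]
    simp
  rw [norm_sq_eq_sum]
  have hys : (y s)^2 = 1 := by rcases hy s with h | h <;> rw [h] <;> norm_num
  calc ∑ p : Fin m × Fin d, (gvec a σ x y w' u t s p)^2
      = ∑ j : Fin m, ∑ i : Fin d, ((y s * (1 / Real.sqrt m) * a j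
          * deriv σ (inner ℝ (Bv x s j) (lineW w' u t) : ℝ)) * x s i)^2 := by
        rw [Fintype.sum_prod_type]
        exact Finset.sum_congr rfl fun j _ => Finset.sum_congr rfl fun i _ => by
          rw [hgent (j, i)]
    _ = ∑ j : Fin m, ((y s)^2 * (1 / Real.sqrt m)^2 * (a j)^2
          * (deriv σ (inner ℝ (Bv x s j) (lineW w' u t) : ℝ))^2) * ∑ i : Fin d, (x s i)^2 := by
        refine Finset.sum_congr rfl fun j _ => ?_
        rw [Finset.mul_sum]
        exact Finset.sum_congr rfl fun i _ => by ring
    _ ≤ ∑ j : Fin m, ((1 / Real.sqrt m)^2 * ℓ^2) * R^2 := by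
        refine Finset.sum_le_sum fun j _ => ?_
        have haj : (a j)^2 = 1 := by rcases ha j with h | h <;> rw [h] <;> norm_num
        have hxr : ∑ i : Fin d, (x s i)^2 ≤ R^2 := by
          rw [← norm_sq_eq_sum]
          exact pow_le_pow_left₀ (norm_nonneg _) (hx s) 2
        have hσb : (deriv σ (inner ℝ (Bv x s j) (lineW w' u t) : ℝ))^2 ≤ ℓ^2 := by
          have := hσ' (inner ℝ (Bv x s j) (lineW w' u t) : ℝ)
          nlinarith [abs_nonneg (deriv σ (inner ℝ (Bv x s j) (lineW w' u t) : ℝ)),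
            sq_abs (deriv σ (inner ℝ (Bv x s j) (lineW w' u t) : ℝ))]
        have h1 : (y s)^2 * (1 / Real.sqrt m)^2 * (a j)^2
            * (deriv σ (inner ℝ (Bv x s j) (lineW w' u t) : ℝ))^2
            ≤ (1 / Real.sqrt m)^2 * ℓ^2 := by
          rw [hys, haj]
          have : (0:ℝ) ≤ (1 / Real.sqrt m)^2 := sq_nonneg _
          nlinarith [hσb]
        have h2 : (0:ℝ) ≤ ∑ i : Fin d, (x s i)^2 := Finset.sum_nonneg fun i _ => sq_nonneg _
        have h3 : (0:ℝ) ≤ (y s)^2 * (1 / Real.sqrt m)^2 * (a j)^2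
            * (deriv σ (inner ℝ (Bv x s j) (lineW w' u t) : ℝ))^2 := by positivity
        calc _ ≤ ((1 / Real.sqrt m)^2 * ℓ^2) * ∑ i : Fin d, (x s i)^2 :=
              mul_le_mul_of_nonneg_right h1 h2
          _ ≤ ((1 / Real.sqrt m)^2 * ℓ^2) * R^2 :=
              mul_le_mul_of_nonneg_left hxr (by positivity)
    _ = (m : ℝ) * (1 / Real.sqrt m)^2 * (ℓ^2 * R^2) := by
        rw [Finset.sum_const, Finset.card_univ, Fintype.card_fin, nsmul_eq_mul]; ring
    _ ≤ 1 * (ℓ^2 * R^2) := by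
        refine mul_le_mul_of_nonneg_right (mc_sq_le_one m) (by positivity)
    _ = ℓ^2 * R^2 := one_mul _
end Bounds

lemma le_of_sq_le_sq'' {a b : ℝ} (h : a^2 ≤ b^2) (ha : 0 ≤ a) (hb : 0 ≤ b) : a ≤ b := by
  nlinarith

section Bounds2
variable {m d n : ℕ} (a : Fin m → ℝ) (σ f : ℝ → ℝ)
  (x : Fin n → EuclideanSpace ℝ (Fin d)) (y : Fin n → ℝ)
  (w' u : EuclideanSpace ℝ (Fin m × Fin d))

noncomputable def subu (u : EuclideanSpace ℝ (Fin m × Fin d)) (j : Fin m) :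
    EuclideanSpace ℝ (Fin d) := WithLp.toLp 2 (fun i => u (j, i))

lemma sum_subu_sq (u : EuclideanSpace ℝ (Fin m × Fin d)) :
    ∑ j : Fin m, ‖subu u j‖^2 = ‖u‖^2 := by
  rw [norm_sq_eq_sum, Fintype.sum_prod_type]
  exact Finset.sum_congr rfl fun j _ => by rw [norm_sq_eq_sum]; rfl

lemma inner_Bv_u (s : Fin n) (j : Fin m) :
    (inner ℝ (Bv x s j) u : ℝ) = (inner ℝ (subu u j) (x s) : ℝ) := by
  rw [inner_Bv, PiLp.inner_apply]
  simp [RCLike.inner_apply, subu, mul_comm]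

lemma empLoss_lineW (t : ℝ) :
    empLoss a σ f x y (lineW w' u t) = ∑ s : Fin n, (1/(n:ℝ)) * f (zfun a σ x y w' u s t) := by
  rw [empLoss, Finset.mul_sum]
  rfl

lemma norm_Qvec_le (L R : ℝ) (ha : ∀ j, a j = 1 ∨ a j = -1)
    (hσ'' : ∀ v, |deriv (deriv σ) v| ≤ L) (hx : ∀ i, ‖x i‖ ≤ R)
    (hy : ∀ i, y i = 1 ∨ y i = -1)
    (hfself : ∀ v, |deriv f v| ≤ f v) (t : ℝ) :
    ‖Qvec a σ f x y w' u t‖ ≤ (1 / Real.sqrt m) * L * R^2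
      * empLoss a σ f x y (lineW w' u t) * ‖u‖ := by
  have hL : 0 ≤ L := le_trans (abs_nonneg _) (hσ'' 0)
  have hc : (0:ℝ) ≤ 1 / Real.sqrt m := by positivity
  have hFt : 0 ≤ empLoss a σ f x y (lineW w' u t) := by
    rw [empLoss_lineW]
    refine Finset.sum_nonneg fun s _ => mul_nonneg (by positivity) ?_
    exact le_trans (abs_nonneg _) (hfself _)
  set k : Fin n → Fin m → ℝ := fun s j => (1/(n:ℝ)) * deriv f (zfun a σ x y w' u s t)
      * (y s * (1 / Real.sqrt m) * a j)
      * deriv (deriv σ) (inner ℝ (Bv x s j) (lineW w' u t) : ℝ)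
      * (inner ℝ (Bv x s j) u : ℝ) with hk
  have hkb : ∀ s j, |k s j| ≤ (1/(n:ℝ)) * f (zfun a σ x y w' u s t)
      * (1 / Real.sqrt m) * L * (R * ‖subu u j‖) := by
    intro s j
    have h1 : |deriv f (zfun a σ x y w' u s t)| ≤ f (zfun a σ x y w' u s t) := hfself _
    have h2 : |y s| = 1 := by rcases hy s with h | h <;> rw [h] <;> norm_num
    have h3 : |a j| = 1 := by rcases ha j with h | h <;> rw [h] <;> norm_num
    have h4 : |deriv (deriv σ) (inner ℝ (Bv x s j) (lineW w' u t) : ℝ)| ≤ L := hσ'' _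
    have h5 : |(inner ℝ (Bv x s j) u : ℝ)| ≤ R * ‖subu u j‖ := by
      rw [inner_Bv_u]
      calc |(inner ℝ (subu u j) (x s) : ℝ)| ≤ ‖subu u j‖ * ‖x s‖ := abs_real_inner_le_norm _ _
        _ ≤ ‖subu u j‖ * R := by
            exact mul_le_mul_of_nonneg_left (hx s) (norm_nonneg _)
        _ = R * ‖subu u j‖ := mul_comm _ _
    have hf0 : 0 ≤ f (zfun a σ x y w' u s t) := le_trans (abs_nonneg _) h1
    rw [hk]
    simp only [abs_mul]
    have hn0 : |(1:ℝ)/(n:ℝ)| = 1/(n:ℝ) := abs_of_nonneg (by positivity)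
    have hc0 : |(1:ℝ)/Real.sqrt m| = 1/Real.sqrt m := abs_of_nonneg hc
    calc |(1:ℝ)/(n:ℝ)| * |deriv f (zfun a σ x y w' u s t)|
          * (|y s| * |(1:ℝ)/Real.sqrt m| * |a j|)
          * |deriv (deriv σ) (inner ℝ (Bv x s j) (lineW w' u t) : ℝ)|
          * |(inner ℝ (Bv x s j) u : ℝ)|
        = (1/(n:ℝ)) * |deriv f (zfun a σ x y w' u s t)| * (1/Real.sqrt m)
          * |deriv (deriv σ) (inner ℝ (Bv x s j) (lineW w' u t) : ℝ)|
          * |(inner ℝ (Bv x s j) u : ℝ)| := by rw [hn0, hc0, h2, h3]; ring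
      _ ≤ (1/(n:ℝ)) * f (zfun a σ x y w' u s t) * (1/Real.sqrt m) * L * (R * ‖subu u j‖) := by
          have hnn : (0:ℝ) ≤ 1/(n:ℝ) := by positivity
          gcongr <;> first | exact abs_nonneg _ | assumption
  -- entry formula for Qvec
  have hent : ∀ p : Fin m × Fin d, Qvec a σ f x y w' u t p = ∑ s : Fin n, k s p.1 * x s p.2 := by
    intro p
    rw [Qvec, sum_apply']
    refine Finset.sum_congr rfl fun s _ => ?_
    rw [sum_apply']
    have : ∀ j : Fin m, (k s j • Bv x s j) p = if p.1 = j then k s j * x s p.2 else 0 := by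
      intro j
      show k s j * Bv x s j p = _
      rw [Bv_apply]
      split <;> simp
    rw [Finset.sum_congr rfl fun j (_ : j ∈ Finset.univ) => this j,
      Finset.sum_ite_eq Finset.univ p.1]
    simp
  -- per-block norm bound
  set Ft := empLoss a σ f x y (lineW w' u t) with hFtdef
  have hblock : ∀ j : Fin m, ∑ i : Fin d, (Qvec a σ f x y w' u t (j, i))^2
      ≤ ((1 / Real.sqrt m) * L * R^2 * Ft * ‖subu u j‖)^2 := by
    intro j
    have hveq : ∀ i : Fin d, Qvec a σ f x y w' u t (j, i) = (∑ s : Fin n, k s j • x s) i := by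
      intro i
      rw [hent (j, i), sum_apply']
      rfl
    have h1 : ∑ i : Fin d, (Qvec a σ f x y w' u t (j, i))^2 = ‖∑ s : Fin n, k s j • x s‖^2 := by
      rw [norm_sq_eq_sum]
      exact Finset.sum_congr rfl fun i _ => by rw [hveq i]
    rw [h1]
    have h2 : ‖∑ s : Fin n, k s j • x s‖ ≤ (1 / Real.sqrt m) * L * R^2 * Ft * ‖subu u j‖ := by
      calc ‖∑ s : Fin n, k s j • x s‖ ≤ ∑ s : Fin n, ‖k s j • x s‖ := norm_sum_le _ _
        _ = ∑ s : Fin n, |k s j| * ‖x s‖ := by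
            exact Finset.sum_congr rfl fun s _ => by rw [norm_smul, Real.norm_eq_abs]
        _ ≤ ∑ s : Fin n, ((1/(n:ℝ)) * f (zfun a σ x y w' u s t)
              * (1 / Real.sqrt m) * L * (R * ‖subu u j‖)) * R := by
            refine Finset.sum_le_sum fun s _ => ?_
            have h3 := hkb s j
            have h4 : (0:ℝ) ≤ (1/(n:ℝ)) * f (zfun a σ x y w' u s t)
                * (1 / Real.sqrt m) * L * (R * ‖subu u j‖) :=
              le_trans (abs_nonneg _) h3
            exact mul_le_mul h3 (hx s) (norm_nonneg _) h4
        _ = (1 / Real.sqrt m) * L * R^2 * (∑ s : Fin n, (1/(n:ℝ)) * f (zfun a σ x y w' u s t))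
              * ‖subu u j‖ := by
            simp only [Finset.mul_sum, Finset.sum_mul]
            exact Finset.sum_congr rfl fun s _ => by ring
        _ = (1 / Real.sqrt m) * L * R^2 * Ft * ‖subu u j‖ := by
            rw [hFtdef, empLoss_lineW]
    have h2' : (0:ℝ) ≤ ‖∑ s : Fin n, k s j • x s‖ := norm_nonneg _
    nlinarith [h2, h2']
  have hfinal : ‖Qvec a σ f x y w' u t‖^2
      ≤ ((1 / Real.sqrt m) * L * R^2 * Ft)^2 * ‖u‖^2 := by
    rw [norm_sq_eq_sum, Fintype.sum_prod_type]
    calc ∑ j : Fin m, ∑ i : Fin d, (Qvec a σ f x y w' u t (j, i))^2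
        ≤ ∑ j : Fin m, ((1 / Real.sqrt m) * L * R^2 * Ft * ‖subu u j‖)^2 :=
          Finset.sum_le_sum fun j _ => hblock j
      _ = ((1 / Real.sqrt m) * L * R^2 * Ft)^2 * ∑ j : Fin m, ‖subu u j‖^2 := by
          rw [Finset.mul_sum]
          exact Finset.sum_congr rfl fun j _ => by ring
      _ = ((1 / Real.sqrt m) * L * R^2 * Ft)^2 * ‖u‖^2 := by rw [sum_subu_sq]
  have hcoefnn : (0:ℝ) ≤ (1 / Real.sqrt m) * L * R^2 * Ft := by positivity
  refine le_of_sq_le_sq'' ?_ (norm_nonneg _) (by positivity)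
  calc ‖Qvec a σ f x y w' u t‖^2 ≤ ((1 / Real.sqrt m) * L * R^2 * Ft)^2 * ‖u‖^2 := hfinal
    _ = ((1 / Real.sqrt m) * L * R^2 * Ft * ‖u‖)^2 := by ring
end Bounds2

section Bounds3
variable {m d n : ℕ} (a : Fin m → ℝ) (σ f : ℝ → ℝ)
  (x : Fin n → EuclideanSpace ℝ (Fin d)) (y : Fin n → ℝ)
  (w' u : EuclideanSpace ℝ (Fin m × Fin d))

lemma norm_sub_smul_Pvec_le (ℓ R η : ℝ) (ha : ∀ j, a j = 1 ∨ a j = -1)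
    (hσ' : ∀ v, |deriv σ v| ≤ ℓ) (hx : ∀ i, ‖x i‖ ≤ R) (hy : ∀ i, y i = 1 ∨ y i = -1)
    (hf : ContDiff ℝ 2 f) (hconv : ConvexOn ℝ Set.univ f)
    (hfsmooth : ∀ v, deriv (deriv f) v ≤ 1)
    (hη : 0 < η) (hηl : η * (ℓ^2 * R^2) ≤ 1) (t : ℝ) :
    ‖u - η • Pvec a σ f x y w' u t‖ ≤ ‖u‖ := by
  set d' : Fin n → ℝ := fun s => (inner ℝ (gvec a σ x y w' u t s) u : ℝ) with hd'
  set c' : Fin n → ℝ := fun s => (1/(n:ℝ)) * deriv (deriv f) (zfun a σ x y w' u s t) with hc'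
  have hcnn : ∀ s, 0 ≤ c' s := fun s =>
    mul_nonneg (by positivity) (second_deriv_nonneg_of_convex_s11 hf hconv _)
  -- T = ⟪u, P⟫
  have hinner : (inner ℝ u (Pvec a σ f x y w' u t) : ℝ) = ∑ s : Fin n, c' s * (d' s)^2 := by
    rw [Pvec, inner_sum]
    refine Finset.sum_congr rfl fun s _ => ?_
    rw [real_inner_smul_right]
    simp only [hc', hd', real_inner_comm u (gvec a σ x y w' u t s)]
    ring
  set T := ∑ s : Fin n, c' s * (d' s)^2 with hT
  have hTnn : 0 ≤ T := Finset.sum_nonneg fun s _ => mul_nonneg (hcnn s) (sq_nonneg _)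
  -- ‖P‖² ≤ ℓ²R² T
  have hgb : ∀ s : Fin n, ‖gvec a σ x y w' u t s‖^2 ≤ ℓ^2 * R^2 :=
    fun s => norm_gvec_sq_le a σ x y w' u ℓ R ha hσ' hx hy t s
  have hPnorm : ‖Pvec a σ f x y w' u t‖ ≤ ∑ s : Fin n, c' s * |d' s| * ‖gvec a σ x y w' u t s‖ := by
    calc ‖Pvec a σ f x y w' u t‖ ≤ ∑ s : Fin n, ‖(c' s * d' s) • gvec a σ x y w' u t s‖ := by
          rw [Pvec]
          refine le_trans (norm_sum_le _ _) (le_of_eq ?_)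
          exact Finset.sum_congr rfl fun s _ => by rw [hc', hd']
      _ = ∑ s : Fin n, c' s * |d' s| * ‖gvec a σ x y w' u t s‖ := by
          refine Finset.sum_congr rfl fun s _ => ?_
          rw [norm_smul, Real.norm_eq_abs, abs_mul, abs_of_nonneg (hcnn s)]
  have hsum1 : ∑ s : Fin n, c' s * ‖gvec a σ x y w' u t s‖^2 ≤ ℓ^2 * R^2 := by
    have hl : 0 ≤ ℓ := le_trans (abs_nonneg _) (hσ' 0)
    have each : ∀ s : Fin n, c' s * ‖gvec a σ x y w' u t s‖^2 ≤ (1/(n:ℝ)) * (ℓ^2 * R^2) := by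
      intro s
      have hc1 : c' s ≤ 1/(n:ℝ) := by
        rw [hc']
        have := hfsmooth (zfun a σ x y w' u s t)
        calc (1/(n:ℝ)) * deriv (deriv f) (zfun a σ x y w' u s t) ≤ (1/(n:ℝ)) * 1 :=
              mul_le_mul_of_nonneg_left this (by positivity)
          _ = 1/(n:ℝ) := mul_one _
      calc c' s * ‖gvec a σ x y w' u t s‖^2 ≤ c' s * (ℓ^2 * R^2) :=
            mul_le_mul_of_nonneg_left (hgb s) (hcnn s)
        _ ≤ (1/(n:ℝ)) * (ℓ^2 * R^2) := mul_le_mul_of_nonneg_right hc1 (by positivity)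
    calc ∑ s : Fin n, c' s * ‖gvec a σ x y w' u t s‖^2
        ≤ ∑ _s : Fin n, (1/(n:ℝ)) * (ℓ^2 * R^2) := Finset.sum_le_sum fun s _ => each s
      _ = (n:ℝ) * ((1/(n:ℝ)) * (ℓ^2 * R^2)) := by
          rw [Finset.sum_const, Finset.card_univ, Fintype.card_fin, nsmul_eq_mul]
      _ ≤ ℓ^2 * R^2 := by
          rcases Nat.eq_zero_or_pos n with h | h
          · simp [h]; positivity
          · have hn : (0:ℝ) < n := by exact_mod_cast h
            rw [← mul_assoc, mul_one_div, div_self hn.ne', one_mul]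
  have hPsq : ‖Pvec a σ f x y w' u t‖^2 ≤ (ℓ^2 * R^2) * T := by
    have hCS := Finset.sum_sq_le_sum_mul_sum_of_sq_eq_mul (Finset.univ (α := Fin n))
      (f := fun s => c' s * ‖gvec a σ x y w' u t s‖^2)
      (g := fun s => c' s * (d' s)^2)
      (r := fun s => c' s * |d' s| * ‖gvec a σ x y w' u t s‖)
      (fun s _ => mul_nonneg (hcnn s) (sq_nonneg _))
      (fun s _ => mul_nonneg (hcnn s) (sq_nonneg _))
      (fun s _ => by rw [mul_pow, mul_pow, sq_abs]; ring)
    have h1 : ‖Pvec a σ f x y w' u t‖^2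
        ≤ (∑ s : Fin n, c' s * |d' s| * ‖gvec a σ x y w' u t s‖)^2 := by
      have hnn : (0:ℝ) ≤ ∑ s : Fin n, c' s * |d' s| * ‖gvec a σ x y w' u t s‖ :=
        le_trans (norm_nonneg _) hPnorm
      nlinarith [hPnorm, norm_nonneg (Pvec a σ f x y w' u t)]
    calc ‖Pvec a σ f x y w' u t‖^2
        ≤ (∑ s : Fin n, c' s * |d' s| * ‖gvec a σ x y w' u t s‖)^2 := h1
      _ ≤ (∑ s : Fin n, c' s * ‖gvec a σ x y w' u t s‖^2) * ∑ s : Fin n, c' s * (d' s)^2 := hCS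
      _ ≤ (ℓ^2 * R^2) * T := mul_le_mul_of_nonneg_right hsum1 hTnn
  -- final expansion
  have hexp : ‖u - η • Pvec a σ f x y w' u t‖^2
      = ‖u‖^2 - 2 * η * T + η^2 * ‖Pvec a σ f x y w' u t‖^2 := by
    rw [norm_sub_sq_real, real_inner_smul_right, hinner, norm_smul, Real.norm_eq_abs,
      abs_of_pos hη, mul_pow]
    ring
  refine le_of_sq_le_sq'' ?_ (norm_nonneg _) (norm_nonneg _)
  rw [hexp]
  nlinarith [hPsq, hTnn, sq_nonneg η, mul_le_mul_of_nonneg_left hPsq (sq_nonneg η),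
    mul_le_mul_of_nonneg_right hηl (mul_nonneg hη.le hTnn), hη.le]
end Bounds3

/-- expansiveness of the GD map for self-bounded losses. -/
theorem GD_expansiveness_self_bounded
    {m d n : ℕ} (ℓ L R η : ℝ)
    (a : Fin m → ℝ) (ha : ∀ j, a j = 1 ∨ a j = -1)
    (σ : ℝ → ℝ) (hσ : ContDiff ℝ 2 σ)
    (hσ' : ∀ u, |deriv σ u| ≤ ℓ) (hσ'' : ∀ u, |deriv (deriv σ) u| ≤ L)
    (f : ℝ → ℝ) (hf : ContDiff ℝ 2 f) (hfconv : ConvexOn ℝ Set.univ f)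
    (hfnonneg : ∀ u, 0 ≤ f u)
    (hfsmooth : ∀ u, deriv (deriv f) u ≤ 1) (hfself : ∀ u, |deriv f u| ≤ f u)
    (x : Fin n → EuclideanSpace ℝ (Fin d)) (y : Fin n → ℝ)
    (hx : ∀ i, ‖x i‖ ≤ R) (hy : ∀ i, y i = 1 ∨ y i = -1)
    (hη : 0 < η) (hηle : η ≤ 1 / (ℓ ^ 2 * R ^ 2))
    (w w' : EuclideanSpace ℝ (Fin m × Fin d)) :
    ‖(w - η • gradient (empLoss a σ f x y) w)
        - (w' - η • gradient (empLoss a σ f x y) w')‖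
      ≤ (1 + η * (L * R ^ 2 / Real.sqrt m)
            * ⨆ α : Set.Icc (0 : ℝ) 1,
                empLoss a σ f x y ((α : ℝ) • w + (1 - (α : ℝ)) • w'))
        * ‖w - w'‖ := by
  have hL : 0 ≤ L := le_trans (abs_nonneg _) (hσ'' 0)
  -- step size: ℓ² R² > 0 and η * (ℓ²R²) ≤ 1
  have hlr : 0 < ℓ^2 * R^2 := by
    by_contra h
    push_neg at h
    rcases lt_or_eq_of_le h with h' | h'
    · have : 1 / (ℓ^2 * R^2) < 0 := div_neg_of_pos_of_neg one_pos h'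
      linarith
    · rw [h', div_zero] at hηle
      linarith
  have hηl : η * (ℓ^2 * R^2) ≤ 1 := by
    rw [le_div_iff₀ hlr] at hηle
    exact hηle
  set u : EuclideanSpace ℝ (Fin m × Fin d) := w - w' with hu
  set C : ℝ := L * R^2 / Real.sqrt m with hC
  have hCnn : 0 ≤ C := by positivity
  set S : ℝ := ⨆ α : Set.Icc (0 : ℝ) 1,
      empLoss a σ f x y ((α : ℝ) • w + (1 - (α : ℝ)) • w') with hS
  -- nonnegativity of empLoss
  have hempnn : ∀ v, 0 ≤ empLoss a σ f x y v := by
    intro v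
    rw [empLoss]
    exact mul_nonneg (by positivity) (Finset.sum_nonneg fun s _ => hfnonneg _)
  -- continuity and boundedness of the sup
  have hcont : Continuous (empLoss a σ f x y) := by
    rw [continuous_iff_continuousAt]
    exact fun v => (hasGradientAt_empLoss a σ f hσ hf x y v).differentiableAt.continuousAt
  have hlinecont : Continuous (fun α : Set.Icc (0:ℝ) 1 =>
      empLoss a σ f x y ((α : ℝ) • w + (1 - (α : ℝ)) • w')) := by
    refine hcont.comp ?_
    exact ((continuous_subtype_val.smul continuous_const).add
      ((continuous_const.sub continuous_subtype_val).smul continuous_const))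
  have hbdd : BddAbove (Set.range (fun α : Set.Icc (0:ℝ) 1 =>
      empLoss a σ f x y ((α : ℝ) • w + (1 - (α : ℝ)) • w'))) :=
    (isCompact_range hlinecont).bddAbove
  have hlineW : ∀ t : ℝ, lineW w' u t = t • w + (1 - t) • w' := by
    intro t
    rw [lineW, hu]
    module
  have hFle : ∀ t ∈ Set.Icc (0:ℝ) 1, empLoss a σ f x y (lineW w' u t) ≤ S := by
    intro t ht
    rw [hlineW t]
    exact le_ciSup hbdd (⟨t, ht⟩ : Set.Icc (0:ℝ) 1)
  have hS0 : 0 ≤ S := le_trans (hempnn _) (hFle 0 (by norm_num))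
  -- the GD map along the segment
  set G : ℝ → EuclideanSpace ℝ (Fin m × Fin d) :=
    fun t => lineW w' u t - η • gradEmp a σ f x y (lineW w' u t) with hG
  have hGderiv : ∀ t : ℝ, HasDerivAt G
      (u - η • (Pvec a σ f x y w' u t + Qvec a σ f x y w' u t)) t := by
    intro t
    have h1 : HasDerivAt (fun t => lineW w' u t) u t := by
      have := ((hasDerivAt_id t).smul_const u).const_add w'
      simpa [lineW] using this
    have h2 := (hasDerivAt_gradEmp_line a σ f x y w' u hσ hf t).const_smul η
    exact h1.sub h2
  -- derivative bound
  have hbound : ∀ t ∈ Set.Icc (0:ℝ) 1,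
      ‖u - η • (Pvec a σ f x y w' u t + Qvec a σ f x y w' u t)‖ ≤ (1 + η * C * S) * ‖u‖ := by
    intro t ht
    have hsplit : u - η • (Pvec a σ f x y w' u t + Qvec a σ f x y w' u t)
        = (u - η • Pvec a σ f x y w' u t) - η • Qvec a σ f x y w' u t := by
      rw [smul_add]
      abel
    rw [hsplit]
    have h1 : ‖u - η • Pvec a σ f x y w' u t‖ ≤ ‖u‖ :=
      norm_sub_smul_Pvec_le a σ f x y w' u ℓ R η ha hσ' hx hy hf hfconv hfsmooth hη hηl t
    have h2 : ‖Qvec a σ f x y w' u t‖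
        ≤ (1 / Real.sqrt m) * L * R^2 * empLoss a σ f x y (lineW w' u t) * ‖u‖ :=
      norm_Qvec_le a σ f x y w' u L R ha hσ'' hx hy hfself t
    have h3 : (1 / Real.sqrt m) * L * R^2 * empLoss a σ f x y (lineW w' u t) * ‖u‖
        ≤ C * S * ‖u‖ := by
      have hCS : (1 / Real.sqrt m) * L * R^2 * empLoss a σ f x y (lineW w' u t) ≤ C * S := by
        have hCeq : C = (1 / Real.sqrt m) * L * R^2 := by rw [hC]; ring
        rw [hCeq]
        exact mul_le_mul_of_nonneg_left (hFle t ht) (by positivity)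
      exact mul_le_mul_of_nonneg_right hCS (norm_nonneg _)
    calc ‖(u - η • Pvec a σ f x y w' u t) - η • Qvec a σ f x y w' u t‖
        ≤ ‖u - η • Pvec a σ f x y w' u t‖ + ‖η • Qvec a σ f x y w' u t‖ := norm_sub_le _ _
      _ ≤ ‖u‖ + η * (C * S * ‖u‖) := by
          refine add_le_add h1 ?_
          rw [norm_smul, Real.norm_eq_abs, abs_of_pos hη]
          exact mul_le_mul_of_nonneg_left (le_trans h2 h3) hη.le
      _ = (1 + η * C * S) * ‖u‖ := by ring
  -- mean value inequality on [0,1]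
  have hMVT := norm_image_sub_le_of_norm_deriv_le_segment_01'
    (f := G) (f' := fun t => u - η • (Pvec a σ f x y w' u t + Qvec a σ f x y w' u t))
    (C := (1 + η * C * S) * ‖u‖)
    (fun t ht => (hGderiv t).hasDerivWithinAt)
    (fun t ht => hbound t (Set.Ico_subset_Icc_self ht))
  have hG1 : G 1 = w - η • gradEmp a σ f x y w := by
    have : lineW w' u 1 = w := by rw [hlineW]; module
    rw [hG]
    simp only [this]
  have hG0 : G 0 = w' - η • gradEmp a σ f x y w' := by
    have : lineW w' u 0 = w' := by rw [hlineW]; module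
    rw [hG]
    simp only [this]
  have hgrad : ∀ v, gradient (empLoss a σ f x y) v = gradEmp a σ f x y v :=
    fun v => (hasGradientAt_empLoss a σ f hσ hf x y v).gradient
  rw [hgrad w, hgrad w', ← hG1, ← hG0]
  exact hMVT
end

section
/- (Descent lemma.) (i) If the loss satisfies the self-boundedness properties |f'(u)| ≤ f(u) and f''(u) ≤ f(u) for all u, then for any w ∈ ℝ^{md} and any step size η < (1/(R²·F̂(w)))·min{1/(ℓ² + L), 1/(√L·ℓ)}, the single gradient step w⁺ := w − η∇F̂(w) satisfies F̂(w⁺) ≤ F̂(w) − (η/2)·‖∇F̂(w)‖². (ii) If instead the loss is 1-Lipschitz (|f'| ≤ 1) and 1-smooth (f'' ≤ 1), then the same conclusion holds for any step size η ≤ 1/L_F̂, where L_F̂ := ℓ²R² + LR²/√m. -/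
open scoped BigOperators

open Set

/-- If `h 0 ≤ 0` and `h' t ≤ k * h t` on `[0,1]`, then `h ≤ 0` on `[0,1]`. -/
lemma gron {h h' : ℝ → ℝ} (k : ℝ) (hd : ∀ t, HasDerivAt h (h' t) t)
    (h0 : h 0 ≤ 0) (hle : ∀ t ∈ Icc (0:ℝ) 1, h' t ≤ k * h t) :
    ∀ t ∈ Icc (0:ℝ) 1, h t ≤ 0 := by
  set H : ℝ → ℝ := fun t => Real.exp (-k * t) * h t with hH
  have hHd : ∀ t, HasDerivAt H (Real.exp (-k * t) * (-k * h t + h' t)) t := by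
    intro t
    have e1 : HasDerivAt (fun t => Real.exp (-k * t)) (Real.exp (-k * t) * (-k)) t := by
      simpa using (((hasDerivAt_id t).const_mul (-k)).exp)
    have := e1.mul (hd t)
    exact this.congr_deriv (by ring)
  have hanti : AntitoneOn H (Icc (0:ℝ) 1) := by
    apply antitoneOn_of_deriv_nonpos (convex_Icc 0 1)
    · exact (Continuous.mul (by continuity) (Differentiable.continuous (fun t => (hd t).differentiableAt))).continuousOn
    · intro t ht
      exact ((hHd t).differentiableAt).differentiableWithinAt
    · intro t ht
      have ht' : t ∈ Icc (0:ℝ) 1 := interior_subset ht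
      rw [(hHd t).deriv]
      have : -k * h t + h' t ≤ 0 := by
        have := hle t ht'
        linarith
      exact mul_nonpos_of_nonneg_of_nonpos (Real.exp_pos _).le this
  intro t ht
  have := hanti (left_mem_Icc.2 zero_le_one) ht ht.1
  have hH0 : H 0 ≤ 0 := by simpa [hH] using h0
  have hHt : H t ≤ 0 := le_trans this hH0
  have hexp := Real.exp_pos (-k * t)
  have hHt' : Real.exp (-k * t) * h t ≤ 0 := hHt
  nlinarith [hHt']

/-- Second-order Taylor-type bound: if `φ'' ≤ A` on `[0,1]` then
`φ 1 ≤ φ 0 + φ' 0 + A/2`. -/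
lemma taylor_bound {φ φ' φ'' : ℝ → ℝ} (A : ℝ)
    (hd1 : ∀ t, HasDerivAt φ (φ' t) t) (hd2 : ∀ t, HasDerivAt φ' (φ'' t) t)
    (hb : ∀ t ∈ Icc (0:ℝ) 1, φ'' t ≤ A) :
    φ 1 ≤ φ 0 + φ' 0 + A / 2 := by
  have step1 : ∀ t ∈ Icc (0:ℝ) 1, φ' t - φ' 0 - A * t ≤ 0 := by
    apply gron (h := fun t => φ' t - φ' 0 - A * t) (h' := fun t => φ'' t - A) 0
    · intro t
      simpa using ((hd2 t).sub_const (φ' 0)).fun_sub ((hasDerivAt_id t).const_mul A)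
    · simp
    · intro t ht; simpa using hb t ht
  have step2 : ∀ t ∈ Icc (0:ℝ) 1,
      φ t - φ 0 - φ' 0 * t - A * t ^ 2 / 2 ≤ 0 := by
    apply gron (h := fun t => φ t - φ 0 - φ' 0 * t - A * t ^ 2 / 2)
      (h' := fun t => φ' t - φ' 0 - A * t) 0
    · intro t
      have h1 : HasDerivAt (fun t : ℝ => A * t ^ 2 / 2) (A * t) t := by
        have := ((hasDerivAt_pow 2 t).const_mul A).div_const 2
        exact this.congr_deriv (by push_cast; ring)
      simpa using (((hd1 t).sub_const (φ 0)).fun_sub ((hasDerivAt_id t).const_mul (φ' 0))).fun_sub h1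
    · simp
    · intro t ht; simpa using step1 t ht
  have := step2 1 (right_mem_Icc.2 zero_le_one)
  simp at this
  linarith

/-- ODE comparison: if `φ'' ≤ a φ` on `[0,1]` with `a > 0`, then
`φ 1 ≤ φ 0 cosh √a + φ' 0 sinh √a / √a`. -/
lemma ode_comparison {φ φ' φ'' : ℝ → ℝ} {a : ℝ} (ha : 0 < a)
    (hd1 : ∀ t, HasDerivAt φ (φ' t) t) (hd2 : ∀ t, HasDerivAt φ' (φ'' t) t)
    (hb : ∀ t ∈ Icc (0:ℝ) 1, φ'' t ≤ a * φ t) :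
    φ 1 ≤ φ 0 * Real.cosh (Real.sqrt a) +
      φ' 0 * (Real.sinh (Real.sqrt a) / Real.sqrt a) := by
  set s := Real.sqrt a with hs
  have hs0 : 0 < s := Real.sqrt_pos.2 ha
  have hs2 : s ^ 2 = a := Real.sq_sqrt ha.le
  set c : ℝ → ℝ := fun t => φ 0 * Real.cosh (s * t) + (φ' 0 / s) * Real.sinh (s * t) with hc
  set c' : ℝ → ℝ := fun t => φ 0 * s * Real.sinh (s * t) + φ' 0 * Real.cosh (s * t) with hc'
  have hst : ∀ t : ℝ, HasDerivAt (fun t : ℝ => s * t) s t := by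
    intro t; simpa using (hasDerivAt_id t).const_mul s
  have hcd : ∀ t, HasDerivAt c (c' t) t := by
    intro t
    have h1 : HasDerivAt (fun t : ℝ => Real.cosh (s * t)) (Real.sinh (s * t) * s) t :=
      (Real.hasDerivAt_cosh (s * t)).comp t (hst t)
    have h2 : HasDerivAt (fun t : ℝ => Real.sinh (s * t)) (Real.cosh (s * t) * s) t :=
      (Real.hasDerivAt_sinh (s * t)).comp t (hst t)
    have := (h1.const_mul (φ 0)).add (h2.const_mul (φ' 0 / s))
    refine this.congr_deriv ?_
    field_simp [hc']
    rfl
  have hcd' : ∀ t, HasDerivAt c' (a * c t) t := by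
    intro t
    have h1 : HasDerivAt (fun t : ℝ => Real.cosh (s * t)) (Real.sinh (s * t) * s) t :=
      (Real.hasDerivAt_cosh (s * t)).comp t (hst t)
    have h2 : HasDerivAt (fun t : ℝ => Real.sinh (s * t)) (Real.cosh (s * t) * s) t :=
      (Real.hasDerivAt_sinh (s * t)).comp t (hst t)
    have := (h2.const_mul (φ 0 * s)).add (h1.const_mul (φ' 0))
    refine this.congr_deriv ?_
    have : a = s * s := by nlinarith
    rw [this, hc]
    field_simp
  -- g := φ - c satisfies g'' ≤ a g, g 0 = 0, g' 0 = 0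
  have hstep1 : ∀ t ∈ Icc (0:ℝ) 1,
      (φ' t - c' t) - s * (φ t - c t) ≤ 0 := by
    apply gron (h := fun t => (φ' t - c' t) - s * (φ t - c t))
      (h' := fun t => (φ'' t - a * c t) - s * (φ' t - c' t)) (-s)
    · intro t
      have := ((hd2 t).fun_sub (hcd' t)).fun_sub (((hd1 t).sub (hcd t)).const_mul s)
      simpa using this
    · simp [hc, hc']
    · intro t ht
      have h1 := hb t ht
      have h2 : φ'' t - a * c t ≤ a * (φ t - c t) := by linarith
      have e : -s * (φ' t - c' t - s * (φ t - c t))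
          = a * (φ t - c t) - s * (φ' t - c' t) := by rw [← hs2]; ring
      linarith [h2, e]
  have hstep2 : ∀ t ∈ Icc (0:ℝ) 1, φ t - c t ≤ 0 := by
    apply gron (h := fun t => φ t - c t) (h' := fun t => φ' t - c' t) s
    · intro t; exact (hd1 t).sub (hcd t)
    · simp [hc]
    · intro t ht; linarith [hstep1 t ht]
  have := hstep2 1 (right_mem_Icc.2 zero_le_one)
  have hc1 : c 1 = φ 0 * Real.cosh s + φ' 0 * (Real.sinh s / s) := by
    simp [hc]; ring
  linarith [hc1 ▸ this]

lemma sinh_le_mul_cosh {x : ℝ} (hx : 0 ≤ x) : Real.sinh x ≤ x * Real.cosh x := by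
  have hanti : AntitoneOn (fun x => Real.sinh x - x * Real.cosh x) (Ici (0:ℝ)) := by
    apply antitoneOn_of_deriv_nonpos (convex_Ici 0)
    · exact (Real.continuous_sinh.sub (continuous_id.mul Real.continuous_cosh)).continuousOn
    · intro t ht
      exact (Real.differentiable_sinh.sub
        (differentiable_id.mul Real.differentiable_cosh)).differentiableAt.differentiableWithinAt
    · intro t ht
      have ht' : 0 < t := by simpa using ht
      have hd : HasDerivAt (fun x => Real.sinh x - x * Real.cosh x) (-(t * Real.sinh t)) t := by
        have := (Real.hasDerivAt_sinh t).sub ((hasDerivAt_id t).mul (Real.hasDerivAt_cosh t))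
        exact this.congr_deriv (by simp only [id_eq]; ring)
      rw [hd.deriv]
      have : 0 ≤ Real.sinh t := Real.sinh_nonneg_iff.2 ht'.le
      nlinarith
  have := hanti (self_mem_Ici) (mem_Ici.2 hx) hx
  simpa using this

lemma cosh_sub_one_le {x : ℝ} (hx : 0 ≤ x) :
    Real.cosh x - 1 ≤ x / 2 * Real.sinh x := by
  have hmono : MonotoneOn (fun x => x / 2 * Real.sinh x - Real.cosh x + 1) (Ici (0:ℝ)) := by
    apply monotoneOn_of_deriv_nonneg (convex_Ici 0)
    · exact (((continuous_id.div_const 2).mul Real.continuous_sinh).sub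
        Real.continuous_cosh).add continuous_const |>.continuousOn
    · intro t ht
      exact ((((differentiable_id.div_const 2).mul Real.differentiable_sinh).sub
        Real.differentiable_cosh).add_const 1).differentiableAt.differentiableWithinAt
    · intro t ht
      have ht' : 0 < t := by simpa using ht
      have hd : HasDerivAt (fun x : ℝ => x / 2 * Real.sinh x - Real.cosh x + 1)
          ((t * Real.cosh t - Real.sinh t) / 2) t := by
        have := ((((hasDerivAt_id t).div_const 2).mul (Real.hasDerivAt_sinh t)).sub
          (Real.hasDerivAt_cosh t)).add_const 1
        exact this.congr_deriv (by simp only [id_eq]; ring)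
      rw [hd.deriv]
      have := sinh_le_mul_cosh ht'.le
      linarith
  have := hmono (self_mem_Ici) (mem_Ici.2 hx) hx
  simp at this
  linarith

lemma key_ineq {u s : ℝ} (hu0 : 0 ≤ u) (hu : u ≤ 1) (hs : 0 ≤ s) :
    u * (Real.cosh s - 1) ≤ s * Real.sinh s - s ^ 2 / 2 := by
  have h1 : Real.cosh s - 1 ≤ s / 2 * Real.sinh s := cosh_sub_one_le hs
  have h2 : s ≤ Real.sinh s := (Real.self_le_sinh_iff).2 hs
  have h3 : 0 ≤ Real.cosh s - 1 := by linarith [Real.one_le_cosh s]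
  have h4 : u * (Real.cosh s - 1) ≤ Real.cosh s - 1 := by nlinarith
  nlinarith

section helpers

lemma contDiff_two_deriv {g : ℝ → ℝ} (hg : ContDiff ℝ 2 g) :
    Differentiable ℝ g ∧ Differentiable ℝ (deriv g) := by
  refine ⟨hg.differentiable (by norm_num), ?_⟩
  have h : ContDiff ℝ ((1 : ℕ) + 1) g := by exact_mod_cast hg
  exact ((contDiff_succ_iff_deriv.mp h).2.2).differentiable (by norm_num)

lemma sumHasDeriv {m : ℕ} (aa A B e : Fin m → ℝ) (c yi : ℝ) (σ : ℝ → ℝ)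
    (hσd : ∀ u, HasDerivAt σ (deriv σ u) u) (t : ℝ) :
    HasDerivAt (fun t => yi * (c * ∑ j, aa j * (σ (A j + t * B j) * e j)))
      (yi * (c * ∑ j, aa j * (deriv σ (A j + t * B j) * B j * e j))) t := by
  have h : ∀ j : Fin m, HasDerivAt (fun t => aa j * (σ (A j + t * B j) * e j))
      (aa j * (deriv σ (A j + t * B j) * B j * e j)) t := by
    intro j
    have h1 : HasDerivAt (fun t : ℝ => A j + t * B j) (B j) t := by
      simpa using (hasDerivAt_mul_const (B j)).const_add (A j)
    exact (((hσd _).comp t h1).mul_const (e j)).const_mul (aa j)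
  exact ((HasDerivAt.fun_sum (fun j _ => h j)).const_mul c).const_mul yi

end helpers

lemma descent_core_ii {φ φ₁ φ₂ : ℝ → ℝ} {A p : ℝ}
    (hd1 : ∀ t, HasDerivAt φ (φ₁ t) t) (hd2 : ∀ t, HasDerivAt φ₁ (φ₂ t) t)
    (hb : ∀ t ∈ Icc (0:ℝ) 1, φ₂ t ≤ A) (hφ10 : φ₁ 0 = -p) (hp : 0 ≤ p)
    (hA : A ≤ p) : φ 1 ≤ φ 0 - p / 2 := by
  have := taylor_bound A hd1 hd2 hb
  rw [hφ10] at this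
  linarith

lemma descent_core_i {φ φ₁ φ₂ : ℝ → ℝ} {aco p u : ℝ}
    (hd1 : ∀ t, HasDerivAt φ (φ₁ t) t) (hd2 : ∀ t, HasDerivAt φ₁ (φ₂ t) t)
    (hb : ∀ t ∈ Icc (0:ℝ) 1, φ₂ t ≤ aco * φ t)
    (ha : 0 < aco) (hφ10 : φ₁ 0 = -p) (hp : 0 ≤ p)
    (hu0 : 0 < u) (hu1 : u ≤ 1) (hφ0 : 0 < φ 0)
    (hpu : p * u = φ 0 * aco) : φ 1 ≤ φ 0 - p / 2 := by
  have hcomp := ode_comparison ha hd1 hd2 hb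
  rw [hφ10] at hcomp
  set s := Real.sqrt aco with hs
  have hs0 : 0 < s := Real.sqrt_pos.2 ha
  have hs2 : s ^ 2 = aco := Real.sq_sqrt ha.le
  have hkey : u * (Real.cosh s - 1) ≤ s * Real.sinh s - s ^ 2 / 2 :=
    key_ineq hu0.le hu1 hs0.le
  -- p * u = φ 0 * s ^ 2
  have hpu' : p * u = φ 0 * s ^ 2 := by rw [hs2]; exact hpu
  -- multiply key inequality by φ 0 / u > 0
  have h1 : φ 0 * (Real.cosh s - 1) ≤ (φ 0 / u) * (s * Real.sinh s - s ^ 2 / 2) := by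
    have := mul_le_mul_of_nonneg_left hkey (le_of_lt (div_pos hφ0 hu0))
    calc φ 0 * (Real.cosh s - 1) = (φ 0 / u) * (u * (Real.cosh s - 1)) := by
          field_simp
      _ ≤ (φ 0 / u) * (s * Real.sinh s - s ^ 2 / 2) := this
  have h2 : (φ 0 / u) * (s * Real.sinh s - s ^ 2 / 2)
      = p * (Real.sinh s / s) - p / 2 := by
    have hpeq : p = φ 0 * s ^ 2 / u := by
      field_simp
      linarith [hpu']
    rw [hpeq]
    field_simp
  have h3 : φ 0 * Real.cosh s + -p * (Real.sinh s / s) ≤ φ 0 - p / 2 := by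
    have := h2 ▸ h1
    linarith
  linarith [hcomp, h3]



set_option maxHeartbeats 1000000 in
/-- descent lemma, both for self-bounded losses (part (i)) and for
1-Lipschitz 1-smooth losses (part (ii)). -/
theorem descent_lemma
    {m d n : ℕ} (ℓ L R η : ℝ)
    (a : Fin m → ℝ) (ha : ∀ j, a j = 1 ∨ a j = -1)
    (σ : ℝ → ℝ) (hσ : ContDiff ℝ 2 σ)
    (hσ' : ∀ u, |deriv σ u| ≤ ℓ) (hσ'' : ∀ u, |deriv (deriv σ) u| ≤ L)
    (f : ℝ → ℝ) (hf : ContDiff ℝ 2 f) (hfconv : ConvexOn ℝ Set.univ f)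
    (hfnonneg : ∀ u, 0 ≤ f u)
    (x : Fin n → EuclideanSpace ℝ (Fin d)) (y : Fin n → ℝ)
    (hx : ∀ i, ‖x i‖ ≤ R) (hy : ∀ i, y i = 1 ∨ y i = -1)
    (hη : 0 < η)
    (w : EuclideanSpace ℝ (Fin m × Fin d)) :
    -- (i) self-bounded losses
    (((∀ u, |deriv f u| ≤ f u) ∧ (∀ u, deriv (deriv f) u ≤ f u) ∧
        η < (1 / (R ^ 2 * empLoss a σ f x y w))
              * min (1 / (ℓ ^ 2 + L)) (1 / (Real.sqrt L * ℓ))) →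
      empLoss a σ f x y (w - η • gradient (empLoss a σ f x y) w)
        ≤ empLoss a σ f x y w - (η / 2) * ‖gradient (empLoss a σ f x y) w‖ ^ 2)
    ∧
    -- (ii) 1-Lipschitz and 1-smooth losses
    (((∀ u, |deriv f u| ≤ 1) ∧ (∀ u, deriv (deriv f) u ≤ 1) ∧
        η ≤ 1 / (ℓ ^ 2 * R ^ 2 + L * R ^ 2 / Real.sqrt m)) →
      empLoss a σ f x y (w - η • gradient (empLoss a σ f x y) w)
        ≤ empLoss a σ f x y w - (η / 2) * ‖gradient (empLoss a σ f x y) w‖ ^ 2) := by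
  classical
  set F := empLoss a σ f x y with hF_def
  by_cases hg0 : gradient F w = 0
  · constructor <;> intro _ <;> simp [hg0]
  set G := gradient F w with hG_def
  set v : EuclideanSpace ℝ (Fin m × Fin d) := (-η) • G with hv_def
  clear_value F
  have hl0 : 0 ≤ ℓ := le_trans (abs_nonneg _) (hσ' 0)
  have hL0 : 0 ≤ L := le_trans (abs_nonneg _) (hσ'' 0)
  obtain ⟨hσdiff, hσdiff2⟩ := contDiff_two_deriv hσ
  obtain ⟨hfdiff, hfdiff2⟩ := contDiff_two_deriv hf
  have hσd : ∀ u, HasDerivAt σ (deriv σ u) u := fun u => (hσdiff u).hasDerivAt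
  have hσd2 : ∀ u, HasDerivAt (deriv σ) (deriv (deriv σ) u) u := fun u => (hσdiff2 u).hasDerivAt
  have hfd : ∀ u, HasDerivAt f (deriv f u) u := fun u => (hfdiff u).hasDerivAt
  have hfd2 : ∀ u, HasDerivAt (deriv f) (deriv (deriv f) u) u := fun u => (hfdiff2 u).hasDerivAt
  set c : ℝ := 1 / Real.sqrt m with hc_def
  clear_value G v c
  have hc0 : 0 ≤ c := by rw [hc_def]; positivity
  have hsqm1 : (1:ℕ) ≤ m → 1 ≤ Real.sqrt m := by
    intro hm
    rw [show (1:ℝ) = Real.sqrt 1 by simp]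
    exact Real.sqrt_le_sqrt (by exact_mod_cast hm)
  have hc1 : c ≤ 1 := by
    rcases Nat.eq_zero_or_pos m with hm | hm
    · simp [hc_def, hm]
    · rw [hc_def, div_le_one (by linarith [hsqm1 hm])]
      exact hsqm1 hm
  have hc2m : c ^ 2 * m ≤ 1 := by
    rcases Nat.eq_zero_or_pos m with hm | hm
    · simp [hm]
    · have hmpos : (0:ℝ) < m := by exact_mod_cast hm
      rw [hc_def]
      rw [div_pow, one_pow, Real.sq_sqrt hmpos.le]
      rw [div_mul_cancel₀ _ (ne_of_gt hmpos)]
  set A : Fin n → Fin m → ℝ := fun i j => ∑ k, w (j, k) * x i k with hA_def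
  set B : Fin n → Fin m → ℝ := fun i j => ∑ k, v (j, k) * x i k with hB_def
  set z : Fin n → ℝ → ℝ :=
    fun i t => y i * (c * ∑ j, a j * σ (A i j + t * B i j)) with hz_def
  set z' : Fin n → ℝ → ℝ :=
    fun i t => y i * (c * ∑ j, a j * (deriv σ (A i j + t * B i j) * B i j)) with hz'_def
  set z'' : Fin n → ℝ → ℝ :=
    fun i t => y i * (c * ∑ j, a j * (deriv (deriv σ) (A i j + t * B i j) * B i j * B i j))
    with hz''_def
  set φ : ℝ → ℝ := fun t => (1/(n:ℝ)) * ∑ i, f (z i t) with hφ_def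
  set φ₁ : ℝ → ℝ := fun t => (1/(n:ℝ)) * ∑ i, deriv f (z i t) * z' i t with hφ₁_def
  set φ₂ : ℝ → ℝ := fun t => (1/(n:ℝ)) *
    ∑ i, (deriv (deriv f) (z i t) * z' i t * z' i t + deriv f (z i t) * z'' i t) with hφ₂_def
  clear_value A B z z' z'' φ φ₁ φ₂
  have hzd : ∀ i t, HasDerivAt (z i) (z' i t) t := by
    intro i t
    have := sumHasDeriv a (A i) (B i) (fun _ => 1) c (y i) σ hσd t
    simp only [mul_one] at this
    simpa [hz_def, hz'_def] using this
  have hzd2 : ∀ i t, HasDerivAt (z' i) (z'' i t) t := by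
    intro i t
    have := sumHasDeriv a (A i) (B i) (B i) c (y i) (deriv σ) hσd2 t
    simpa [hz'_def, hz''_def] using this
  have hφd : ∀ t, HasDerivAt φ (φ₁ t) t := by
    intro t
    have h : ∀ i : Fin n, HasDerivAt (fun t => f (z i t)) (deriv f (z i t) * z' i t) t :=
      fun i => (hfd (z i t)).comp t (hzd i t)
    simpa [hφ_def, hφ₁_def] using (HasDerivAt.fun_sum (fun i _ => h i)).const_mul (1/(n:ℝ))
  have hφd2 : ∀ t, HasDerivAt φ₁ (φ₂ t) t := by
    intro t
    have h : ∀ i : Fin n, HasDerivAt (fun t => deriv f (z i t) * z' i t)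
        (deriv (deriv f) (z i t) * z' i t * z' i t + deriv f (z i t) * z'' i t) t :=
      fun i => ((hfd2 (z i t)).comp t (hzd i t)).mul (hzd2 i t)
    simpa [hφ₁_def, hφ₂_def] using (HasDerivAt.fun_sum (fun i _ => h i)).const_mul (1/(n:ℝ))
  have hFφ : ∀ t : ℝ, F (w + t • v) = φ t := by
    intro t
    have hsum : ∀ (i : Fin n) (j : Fin m),
        (∑ k, (w + t • v) (j, k) * x i k) = A i j + t * B i j := by
      intro i j
      simp only [PiLp.add_apply, PiLp.smul_apply, smul_eq_mul, add_mul,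
        Finset.sum_add_distrib, hA_def, hB_def, Finset.mul_sum, mul_assoc]
    simp only [hF_def, empLoss, Phi, hφ_def, hz_def, hsum, ← hc_def]
  have hφ0eq : φ 0 = F w := by
    have h := hFφ 0
    rw [zero_smul, add_zero] at h
    exact h.symm
  have hφ1eq : φ 1 = F (w - η • G) := by
    have h := hFφ 1
    rw [one_smul, hv_def, neg_smul, ← sub_eq_add_neg] at h
    exact h.symm
  -- differentiability of F and the gradient connection
  have hdiffF : Differentiable ℝ F := by
    rw [hF_def]
    have hrepr : (empLoss a σ f x y) = fun w' => (1/(n:ℝ)) *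
        ∑ i, f (y i * ((1 / Real.sqrt m) * ∑ j, a j * σ (∑ k, w' (j, k) * x i k))) := rfl
    rw [hrepr]
    apply Differentiable.const_mul
    apply Differentiable.fun_sum
    intro i _
    apply hfdiff.comp
    apply Differentiable.const_mul
    apply Differentiable.const_mul
    apply Differentiable.fun_sum
    intro j _
    apply Differentiable.const_mul
    apply hσdiff.comp
    apply Differentiable.fun_sum
    intro k _
    exact ((EuclideanSpace.proj (𝕜 := ℝ) ((j, k) : Fin m × Fin d)).differentiable).mul_const _
  have hgradat : HasGradientAt F G w := hG_def ▸ (hdiffF w).hasGradientAt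
  have hline : HasDerivAt (fun t : ℝ => w + t • v) v 0 := by
    simpa using ((hasDerivAt_id (0:ℝ)).smul_const v).const_add w
  have hgat : HasFDerivAt F (InnerProductSpace.toDual ℝ _ G) (w + (0:ℝ) • v) := by
    rw [zero_smul, add_zero]; exact hgradat.hasFDerivAt
  have hcomp : HasDerivAt (fun t : ℝ => F (w + t • v)) ((inner ℝ G v : ℝ)) 0 := by
    have h := hgat.comp_hasDerivAt 0 hline
    simpa [InnerProductSpace.toDual_apply_apply, Function.comp_def] using h
  have hφ10 : φ₁ 0 = -(η * ‖G‖ ^ 2) := by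
    have heq : (fun t : ℝ => F (w + t • v)) = φ := funext hFφ
    rw [heq] at hcomp
    have h1 := (hφd 0).unique hcomp
    rw [h1, hv_def, real_inner_smul_right, real_inner_self_eq_norm_sq]
    ring
  -- norm computations
  have hvn : ‖v‖ ^ 2 = η ^ 2 * ‖G‖ ^ 2 := by
    rw [hv_def, norm_smul, Real.norm_eq_abs, abs_neg, abs_of_pos hη]
    ring
  have hx2 : ∀ i, ∑ k, (x i k) ^ 2 ≤ R ^ 2 := by
    intro i
    have h1 : ∑ k, (x i k) ^ 2 = ‖x i‖ ^ 2 := by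
      rw [EuclideanSpace.norm_eq, Real.sq_sqrt (by positivity)]
      simp [Real.norm_eq_abs, sq_abs]
    rw [h1]
    have h2 := hx i
    nlinarith [norm_nonneg (x i)]
  have hnv : ∑ j, ∑ k, (v (j, k)) ^ 2 = ‖v‖ ^ 2 := by
    rw [EuclideanSpace.norm_eq, Real.sq_sqrt (by positivity), Fintype.sum_prod_type]
    simp [Real.norm_eq_abs, sq_abs]
  have hB2 : ∀ i, ∑ j, (B i j) ^ 2 ≤ R ^ 2 * ‖v‖ ^ 2 := by
    intro i
    have hj : ∀ j : Fin m, (B i j) ^ 2 ≤ (∑ k, (v (j, k)) ^ 2) * R ^ 2 := by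
      intro j
      have hcs := Finset.sum_mul_sq_le_sq_mul_sq Finset.univ
        (fun k => v (j, k)) (fun k => x i k)
      have h1 : (B i j) ^ 2 ≤ (∑ k, (v (j, k)) ^ 2) * (∑ k, (x i k) ^ 2) := by
        simp only [hB_def]; exact hcs
      calc (B i j) ^ 2 ≤ (∑ k, (v (j, k)) ^ 2) * (∑ k, (x i k) ^ 2) := h1
        _ ≤ (∑ k, (v (j, k)) ^ 2) * R ^ 2 :=
          mul_le_mul_of_nonneg_left (hx2 i) (by positivity)
    calc ∑ j, (B i j) ^ 2 ≤ ∑ j, (∑ k, (v (j, k)) ^ 2) * R ^ 2 :=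
          Finset.sum_le_sum (fun j _ => hj j)
      _ = R ^ 2 * ‖v‖ ^ 2 := by rw [← Finset.sum_mul, hnv]; ring
  have hy2 : ∀ i, (y i) ^ 2 = 1 := by
    intro i; rcases hy i with h | h <;> rw [h] <;> norm_num
  have ha2 : ∀ j, (a j) ^ 2 = 1 := by
    intro j; rcases ha j with h | h <;> rw [h] <;> norm_num
  have haabs : ∀ j, |a j| = 1 := by
    intro j; rcases ha j with h | h <;> rw [h] <;> norm_num
  have hyabs : ∀ i, |y i| = 1 := by
    intro i; rcases hy i with h | h <;> rw [h] <;> norm_num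
  have hz'sq : ∀ i t, (z' i t) ^ 2 ≤ ℓ ^ 2 * (R ^ 2 * ‖v‖ ^ 2) := by
    intro i t
    have hw1 : ∀ j, (a j * deriv σ (A i j + t * B i j)) ^ 2 ≤ ℓ ^ 2 := by
      intro j
      have h1 := hσ' (A i j + t * B i j)
      have h2 := ha2 j
      have h3 : (a j * deriv σ (A i j + t * B i j)) ^ 2
          = (deriv σ (A i j + t * B i j)) ^ 2 := by
        rw [mul_pow, h2, one_mul]
      rw [h3]
      nlinarith [abs_nonneg (deriv σ (A i j + t * B i j)),
        sq_abs (deriv σ (A i j + t * B i j))]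
    have hsum1 : ∑ j, (a j * deriv σ (A i j + t * B i j)) ^ 2 ≤ (m:ℝ) * ℓ ^ 2 := by
      calc ∑ j, (a j * deriv σ (A i j + t * B i j)) ^ 2 ≤ ∑ _j : Fin m, ℓ ^ 2 :=
            Finset.sum_le_sum (fun j _ => hw1 j)
        _ = (m:ℝ) * ℓ ^ 2 := by
            rw [Finset.sum_const, Finset.card_univ, Fintype.card_fin, nsmul_eq_mul]
    have hT2 : (∑ j, a j * (deriv σ (A i j + t * B i j) * B i j)) ^ 2
        ≤ ((m:ℝ) * ℓ ^ 2) * (R ^ 2 * ‖v‖ ^ 2) := by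
      have hcs : (∑ j, a j * (deriv σ (A i j + t * B i j) * B i j)) ^ 2
          ≤ (∑ j, (a j * deriv σ (A i j + t * B i j)) ^ 2) * (∑ j, (B i j) ^ 2) := by
        have := Finset.sum_mul_sq_le_sq_mul_sq Finset.univ
          (fun j => a j * deriv σ (A i j + t * B i j)) (fun j => B i j)
        simpa [mul_assoc] using this
      calc (∑ j, a j * (deriv σ (A i j + t * B i j) * B i j)) ^ 2
          ≤ (∑ j, (a j * deriv σ (A i j + t * B i j)) ^ 2) * (∑ j, (B i j) ^ 2) := hcs
        _ ≤ ((m:ℝ) * ℓ ^ 2) * (R ^ 2 * ‖v‖ ^ 2) := by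
            apply mul_le_mul hsum1 (hB2 i) ?_ (by positivity)
            positivity
    rw [hz'_def]
    calc (y i * (c * ∑ j, a j * (deriv σ (A i j + t * B i j) * B i j))) ^ 2
        = (y i) ^ 2 * (c ^ 2 * (∑ j, a j * (deriv σ (A i j + t * B i j) * B i j)) ^ 2) := by
          ring
      _ = c ^ 2 * (∑ j, a j * (deriv σ (A i j + t * B i j) * B i j)) ^ 2 := by
          rw [hy2 i]; ring
      _ ≤ c ^ 2 * (((m:ℝ) * ℓ ^ 2) * (R ^ 2 * ‖v‖ ^ 2)) :=
          mul_le_mul_of_nonneg_left hT2 (by positivity)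
      _ = (c ^ 2 * m) * (ℓ ^ 2 * (R ^ 2 * ‖v‖ ^ 2)) := by ring
      _ ≤ 1 * (ℓ ^ 2 * (R ^ 2 * ‖v‖ ^ 2)) :=
          mul_le_mul_of_nonneg_right hc2m (by positivity)
      _ = ℓ ^ 2 * (R ^ 2 * ‖v‖ ^ 2) := one_mul _
  have hz''abs : ∀ i t, |z'' i t| ≤ c * (L * (R ^ 2 * ‖v‖ ^ 2)) := by
    intro i t
    have h1 : |∑ j, a j * (deriv (deriv σ) (A i j + t * B i j) * B i j * B i j)|
        ≤ ∑ j, L * (B i j) ^ 2 := by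
      calc |∑ j, a j * (deriv (deriv σ) (A i j + t * B i j) * B i j * B i j)|
          ≤ ∑ j, |a j * (deriv (deriv σ) (A i j + t * B i j) * B i j * B i j)| :=
            Finset.abs_sum_le_sum_abs _ _
        _ ≤ ∑ j, L * (B i j) ^ 2 := by
            apply Finset.sum_le_sum
            intro j _
            rw [abs_mul, haabs j, one_mul, abs_mul, abs_mul]
            have h2 := hσ'' (A i j + t * B i j)
            have h3 : |B i j| * |B i j| = (B i j) ^ 2 := by
              rw [← abs_mul, ← sq, abs_of_nonneg (sq_nonneg _)]
            rw [mul_assoc, h3]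
            exact mul_le_mul_of_nonneg_right h2 (sq_nonneg _)
    have h4 : ∑ j, L * (B i j) ^ 2 ≤ L * (R ^ 2 * ‖v‖ ^ 2) := by
      rw [← Finset.mul_sum]
      exact mul_le_mul_of_nonneg_left (hB2 i) hL0
    rw [hz''_def]
    calc |y i * (c * ∑ j, a j * (deriv (deriv σ) (A i j + t * B i j) * B i j * B i j))|
        = |y i| * (|c| * |∑ j, a j * (deriv (deriv σ) (A i j + t * B i j) * B i j * B i j)|) := by
          rw [abs_mul, abs_mul]
      _ = |c| * |∑ j, a j * (deriv (deriv σ) (A i j + t * B i j) * B i j * B i j)| := by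
          rw [hyabs i, one_mul]
      _ = c * |∑ j, a j * (deriv (deriv σ) (A i j + t * B i j) * B i j * B i j)| := by
          rw [abs_of_nonneg hc0]
      _ ≤ c * (L * (R ^ 2 * ‖v‖ ^ 2)) := by
          apply mul_le_mul_of_nonneg_left _ hc0
          exact le_trans h1 h4
  have hz''i : ∀ i t, |z'' i t| ≤ L * (R ^ 2 * ‖v‖ ^ 2) := by
    intro i t
    refine le_trans (hz''abs i t) ?_
    nlinarith [hc1, hc0, hL0, sq_nonneg R, sq_nonneg ‖v‖, mul_nonneg hL0 (by positivity : (0:ℝ) ≤ R ^ 2 * ‖v‖ ^ 2)]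
  have hz''ii : ∀ i t, |z'' i t| ≤ L * R ^ 2 / Real.sqrt m * ‖v‖ ^ 2 := by
    intro i t
    refine le_trans (hz''abs i t) (le_of_eq ?_)
    rw [hc_def]
    ring
  have hφnn : ∀ t, 0 ≤ φ t := by
    intro t
    rw [hφ_def]
    exact mul_nonneg (by positivity) (Finset.sum_nonneg fun i _ => hfnonneg _)
  have hGn : 0 < ‖G‖ := norm_pos_iff.mpr hg0
  have hp0 : 0 ≤ η * ‖G‖ ^ 2 := by positivity
  constructor
  · -- part (i)
    rintro ⟨hf1, hf2, hηi⟩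
    have hF0nn : 0 ≤ F w := by rw [← hφ0eq]; exact hφnn 0
    have hRF : 0 < R ^ 2 * F w := by
      rcases lt_or_eq_of_le (by positivity : (0:ℝ) ≤ R ^ 2 * F w) with h | h
      · exact h
      · exfalso
        rw [← h] at hηi
        simp at hηi
        linarith
    have hR2 : 0 < R ^ 2 := by
      by_contra h'
      push_neg at h'
      have : R ^ 2 = 0 := le_antisymm h' (sq_nonneg R)
      rw [this, zero_mul] at hRF
      exact lt_irrefl 0 hRF
    have hFw : 0 < F w := by
      by_contra h'
      push_neg at h'
      have : F w = 0 := le_antisymm h' hF0nn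
      rw [this, mul_zero] at hRF
      exact lt_irrefl 0 hRF
    have hlL : 0 < ℓ ^ 2 + L := by
      rcases lt_or_eq_of_le (by positivity : (0:ℝ) ≤ ℓ ^ 2 + L) with h | h
      · exact h
      · exfalso
        have hLz : L = 0 := by nlinarith
        have hlz : ℓ = 0 := by nlinarith
        rw [hlz, hLz] at hηi
        norm_num at hηi
        linarith
    have hu1 : η * (R ^ 2 * F w) * (ℓ ^ 2 + L) < 1 := by
      have h1 : min (1/(ℓ ^ 2 + L)) (1/(Real.sqrt L * ℓ)) ≤ 1/(ℓ ^ 2 + L) :=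
        min_le_left _ _
      have h2 : η < (1/(R ^ 2 * F w)) * (1/(ℓ ^ 2 + L)) :=
        lt_of_lt_of_le hηi (mul_le_mul_of_nonneg_left h1 (by positivity))
      rw [div_mul_div_comm, one_mul] at h2
      rw [lt_div_iff₀ (by positivity)] at h2
      have h3 : η * (R ^ 2 * F w) * (ℓ ^ 2 + L) = η * (R ^ 2 * F w * (ℓ ^ 2 + L)) := by ring
      rw [h3]
      exact h2
    have hu0 : 0 < η * (R ^ 2 * F w) * (ℓ ^ 2 + L) := by positivity
    have hvpos : 0 < ‖v‖ ^ 2 := by rw [hvn]; positivity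
    have haco : 0 < (ℓ ^ 2 + L) * (R ^ 2 * ‖v‖ ^ 2) := by
      apply mul_pos hlL (mul_pos hR2 hvpos)
    have hbound : ∀ t ∈ Icc (0:ℝ) 1, φ₂ t ≤ ((ℓ ^ 2 + L) * (R ^ 2 * ‖v‖ ^ 2)) * φ t := by
      intro t _
      have hterm : ∀ i : Fin n,
          deriv (deriv f) (z i t) * z' i t * z' i t + deriv f (z i t) * z'' i t
          ≤ f (z i t) * ((ℓ ^ 2 + L) * (R ^ 2 * ‖v‖ ^ 2)) := by
        intro i
        have h1 : deriv (deriv f) (z i t) * z' i t * z' i t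
            ≤ f (z i t) * (ℓ ^ 2 * (R ^ 2 * ‖v‖ ^ 2)) := by
          have e1 : deriv (deriv f) (z i t) * z' i t * z' i t
              = deriv (deriv f) (z i t) * (z' i t) ^ 2 := by ring
          rw [e1]
          calc deriv (deriv f) (z i t) * (z' i t) ^ 2
              ≤ f (z i t) * (z' i t) ^ 2 :=
                mul_le_mul_of_nonneg_right (hf2 _) (sq_nonneg _)
            _ ≤ f (z i t) * (ℓ ^ 2 * (R ^ 2 * ‖v‖ ^ 2)) :=
                mul_le_mul_of_nonneg_left (hz'sq i t) (hfnonneg _)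
        have h2 : deriv f (z i t) * z'' i t ≤ f (z i t) * (L * (R ^ 2 * ‖v‖ ^ 2)) := by
          calc deriv f (z i t) * z'' i t ≤ |deriv f (z i t) * z'' i t| := le_abs_self _
            _ = |deriv f (z i t)| * |z'' i t| := abs_mul _ _
            _ ≤ f (z i t) * (L * (R ^ 2 * ‖v‖ ^ 2)) :=
                mul_le_mul (hf1 _) (hz''i i t) (abs_nonneg _) (hfnonneg _)
        have e2 : f (z i t) * ((ℓ ^ 2 + L) * (R ^ 2 * ‖v‖ ^ 2))
            = f (z i t) * (ℓ ^ 2 * (R ^ 2 * ‖v‖ ^ 2)) + f (z i t) * (L * (R ^ 2 * ‖v‖ ^ 2)) := by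
          ring
        linarith
      rw [hφ₂_def, hφ_def]
      calc (1/(n:ℝ)) * ∑ i, (deriv (deriv f) (z i t) * z' i t * z' i t
              + deriv f (z i t) * z'' i t)
          ≤ (1/(n:ℝ)) * ∑ i, f (z i t) * ((ℓ ^ 2 + L) * (R ^ 2 * ‖v‖ ^ 2)) := by
            apply mul_le_mul_of_nonneg_left (Finset.sum_le_sum fun i _ => hterm i)
            positivity
        _ = ((ℓ ^ 2 + L) * (R ^ 2 * ‖v‖ ^ 2)) * ((1/(n:ℝ)) * ∑ i, f (z i t)) := by
            rw [← Finset.sum_mul]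
            ring
    have hpu : (η * ‖G‖ ^ 2) * (η * (R ^ 2 * F w) * (ℓ ^ 2 + L))
        = φ 0 * ((ℓ ^ 2 + L) * (R ^ 2 * ‖v‖ ^ 2)) := by
      rw [hφ0eq, hvn]
      ring
    have hres := descent_core_i hφd hφd2 hbound haco hφ10 hp0 hu0 hu1.le
      (by rw [hφ0eq]; exact hFw) hpu
    rw [hφ1eq, hφ0eq] at hres
    linarith
  · -- part (ii)
    rintro ⟨hf1, hf2, hηii⟩
    have hβnn : 0 ≤ ℓ ^ 2 * R ^ 2 + L * R ^ 2 / Real.sqrt m := by positivity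
    have hβpos : 0 < ℓ ^ 2 * R ^ 2 + L * R ^ 2 / Real.sqrt m := by
      rcases lt_or_eq_of_le hβnn with h | h
      · exact h
      · exfalso
        rw [← h] at hηii
        simp at hηii
        linarith
    have hβη : η * (ℓ ^ 2 * R ^ 2 + L * R ^ 2 / Real.sqrt m) ≤ 1 :=
      (le_div_iff₀ hβpos).mp hηii
    have hbound : ∀ t ∈ Icc (0:ℝ) 1,
        φ₂ t ≤ (ℓ ^ 2 * R ^ 2 + L * R ^ 2 / Real.sqrt m) * ‖v‖ ^ 2 := by
      intro t _
      have hterm : ∀ i : Fin n,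
          deriv (deriv f) (z i t) * z' i t * z' i t + deriv f (z i t) * z'' i t
          ≤ (ℓ ^ 2 * R ^ 2 + L * R ^ 2 / Real.sqrt m) * ‖v‖ ^ 2 := by
        intro i
        have h1 : deriv (deriv f) (z i t) * z' i t * z' i t
            ≤ ℓ ^ 2 * (R ^ 2 * ‖v‖ ^ 2) := by
          have e1 : deriv (deriv f) (z i t) * z' i t * z' i t
              = deriv (deriv f) (z i t) * (z' i t) ^ 2 := by ring
          rw [e1]
          calc deriv (deriv f) (z i t) * (z' i t) ^ 2
              ≤ 1 * (z' i t) ^ 2 := mul_le_mul_of_nonneg_right (hf2 _) (sq_nonneg _)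
            _ = (z' i t) ^ 2 := one_mul _
            _ ≤ ℓ ^ 2 * (R ^ 2 * ‖v‖ ^ 2) := hz'sq i t
        have h2 : deriv f (z i t) * z'' i t ≤ L * R ^ 2 / Real.sqrt m * ‖v‖ ^ 2 := by
          calc deriv f (z i t) * z'' i t ≤ |deriv f (z i t) * z'' i t| := le_abs_self _
            _ = |deriv f (z i t)| * |z'' i t| := abs_mul _ _
            _ ≤ 1 * |z'' i t| := mul_le_mul_of_nonneg_right (hf1 _) (abs_nonneg _)
            _ = |z'' i t| := one_mul _
            _ ≤ L * R ^ 2 / Real.sqrt m * ‖v‖ ^ 2 := hz''ii i t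
        have e2 : (ℓ ^ 2 * R ^ 2 + L * R ^ 2 / Real.sqrt m) * ‖v‖ ^ 2
            = ℓ ^ 2 * (R ^ 2 * ‖v‖ ^ 2) + L * R ^ 2 / Real.sqrt m * ‖v‖ ^ 2 := by ring
        linarith
      have hKnn : 0 ≤ (ℓ ^ 2 * R ^ 2 + L * R ^ 2 / Real.sqrt m) * ‖v‖ ^ 2 := by positivity
      rw [hφ₂_def]
      calc (1/(n:ℝ)) * ∑ i, (deriv (deriv f) (z i t) * z' i t * z' i t
              + deriv f (z i t) * z'' i t)
          ≤ (1/(n:ℝ)) * ∑ _i : Fin n, (ℓ ^ 2 * R ^ 2 + L * R ^ 2 / Real.sqrt m) * ‖v‖ ^ 2 := by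
            apply mul_le_mul_of_nonneg_left (Finset.sum_le_sum fun i _ => hterm i)
            positivity
        _ ≤ (ℓ ^ 2 * R ^ 2 + L * R ^ 2 / Real.sqrt m) * ‖v‖ ^ 2 := by
            rw [Finset.sum_const, Finset.card_univ, Fintype.card_fin, nsmul_eq_mul]
            rcases Nat.eq_zero_or_pos n with hn | hn
            · simp [hn]
              exact hKnn
            · have hn' : (n:ℝ) ≠ 0 := Nat.cast_ne_zero.mpr hn.ne'
              rw [one_div, inv_mul_cancel_left₀ hn']
    have hA : (ℓ ^ 2 * R ^ 2 + L * R ^ 2 / Real.sqrt m) * ‖v‖ ^ 2 ≤ η * ‖G‖ ^ 2 := by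
      rw [hvn]
      have h1 := mul_le_mul_of_nonneg_right hβη (by positivity : (0:ℝ) ≤ η * ‖G‖ ^ 2)
      calc (ℓ ^ 2 * R ^ 2 + L * R ^ 2 / Real.sqrt m) * (η ^ 2 * ‖G‖ ^ 2)
          = η * (ℓ ^ 2 * R ^ 2 + L * R ^ 2 / Real.sqrt m) * (η * ‖G‖ ^ 2) := by ring
        _ ≤ 1 * (η * ‖G‖ ^ 2) := h1
        _ = η * ‖G‖ ^ 2 := one_mul _
    have hres := descent_core_ii hφd hφd2 hbound hφ10 hp0 hA
    rw [hφ1eq, hφ0eq] at hres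
    linarith
end

section
/- Suppose the loss is self-bounded (|f'(u)| ≤ f(u)), the gradient-descent iterates satisfy the descent condition F̂(w_{t+1}) ≤ F̂(w_t) − (η/2)‖∇F̂(w_t)‖² for all t ≥ 0, and w ∈ ℝ^{md} and the width m satisfy √m ≥ 2LR²·‖w − w_t‖² for all t ∈ {0,1,…,T−1}. Then (1/T)·Σ_{t=1}^T F̂(w_t) ≤ 2·F̂(w) + 2‖w − w_0‖²/(ηT) + F̂(w_0)/(2T). -/
open scoped BigOperators

open Set Finset

lemma convex_tangent_le {φ : ℝ → ℝ} (hc : ConvexOn ℝ Set.univ φ) {q φ' : ℝ}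
    (hd : HasDerivAt φ φ' q) (p : ℝ) : φ q + φ' * (p - q) ≤ φ p := by
  rcases lt_trichotomy q p with h | h | h
  · have h2 := hc.le_slope_of_hasDerivAt (mem_univ q) (mem_univ p) h hd
    rw [slope_def_field] at h2
    have hpq : 0 < p - q := by linarith
    rw [le_div_iff₀ hpq] at h2
    nlinarith
  · simp [h]
  · have h2 := hc.slope_le_of_hasDerivAt (mem_univ p) (mem_univ q) h hd
    rw [slope_def_field] at h2
    have hpq : 0 < q - p := by linarith
    rw [div_le_iff₀ hpq] at h2
    nlinarith

lemma taylor_ge {h h' h'' : ℝ → ℝ} {K : ℝ}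
    (hd1 : ∀ s, HasDerivAt h (h' s) s) (hd2 : ∀ s, HasDerivAt h' (h'' s) s)
    (hK : ∀ s, -K ≤ h'' s) : -(K / 2) ≤ h 1 - h 0 - h' 0 := by
  have dphi : ∀ s : ℝ, HasDerivAt (fun u => K * u ^ 2 / 2) (K * s) s := by
    intro s
    have hp : HasDerivAt (fun u : ℝ => u ^ 2) (2 * s) s := by
      simpa using (hasDerivAt_pow 2 s)
    exact ((hp.const_mul K).div_const 2).congr_deriv (by ring)
  have hϕd : ∀ s, HasDerivAt (fun u => h u + K * u ^ 2 / 2) (h' s + K * s) s :=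
    fun s => (hd1 s).add (dphi s)
  have hϕd2 : ∀ s, HasDerivAt (fun u => h' u + K * u) (h'' s + K) s :=
    fun s => (hd2 s).add (by simpa using (hasDerivAt_id s).const_mul K)
  have e1 : deriv (fun u => h u + K * u ^ 2 / 2) = fun s => h' s + K * s :=
    funext fun s => (hϕd s).deriv
  have hc : ConvexOn ℝ Set.univ (fun u => h u + K * u ^ 2 / 2) := by
    apply convexOn_of_deriv2_nonneg convex_univ
    · exact fun s _ => ((hϕd s).differentiableAt).continuousAt.continuousWithinAt
    · exact fun s _ => ((hϕd s).differentiableAt).differentiableWithinAt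
    · rw [e1]
      exact fun s _ => ((hϕd2 s).differentiableAt).differentiableWithinAt
    · intro s _
      have e2 : deriv^[2] (fun u => h u + K * u ^ 2 / 2) s = h'' s + K := by
        simp only [Function.iterate_succ, Function.iterate_zero, Function.comp_apply, id_eq]
        rw [e1]
        exact (hϕd2 s).deriv
      rw [e2]
      have := hK s; linarith
  have := convex_tangent_le hc (hϕd 0) 1
  simp at this
  linarith

lemma taylor_abs_le {h h' h'' : ℝ → ℝ} {K : ℝ}
    (hd1 : ∀ s, HasDerivAt h (h' s) s) (hd2 : ∀ s, HasDerivAt h' (h'' s) s)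
    (hK : ∀ s, |h'' s| ≤ K) : |h 1 - h 0 - h' 0| ≤ K / 2 := by
  have A := taylor_ge hd1 hd2 (fun s => (abs_le.mp (hK s)).1)
  have B := taylor_ge (h := fun s => -h s) (h' := fun s => -h' s) (h'' := fun s => -h'' s) (K := K)
    (fun s => (hd1 s).neg) (fun s => (hd2 s).neg)
    (fun s => by show -K ≤ -h'' s; have := (abs_le.mp (hK s)).2; linarith)
  rw [abs_le]; constructor <;> [linarith; (simp at B; linarith)]

lemma phi_differentiable {m d : ℕ} (a : Fin m → ℝ) (σ : ℝ → ℝ) (hσ : Differentiable ℝ σ)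
    (xi : EuclideanSpace ℝ (Fin d)) :
    Differentiable ℝ (fun w : EuclideanSpace ℝ (Fin m × Fin d) => Phi a σ w xi) := by
  unfold Phi
  apply Differentiable.const_mul
  apply Differentiable.fun_sum
  intro j _
  apply Differentiable.const_mul
  apply hσ.comp
  apply Differentiable.fun_sum
  intro i _
  have hp : Differentiable ℝ (fun w : EuclideanSpace ℝ (Fin m × Fin d) => w (j, i)) :=
    (EuclideanSpace.proj (𝕜 := ℝ) ((j, i) : Fin m × Fin d)).differentiable
  exact hp.mul_const _

lemma empLoss_differentiable {m d n : ℕ} (a : Fin m → ℝ) (σ f : ℝ → ℝ)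
    (x : Fin n → EuclideanSpace ℝ (Fin d)) (y : Fin n → ℝ)
    (hσ : Differentiable ℝ σ) (hf : Differentiable ℝ f) :
    Differentiable ℝ (empLoss a σ f x y) := by
  unfold empLoss
  apply Differentiable.const_mul
  apply Differentiable.fun_sum
  intro i _
  exact hf.comp ((phi_differentiable a σ hσ (x i)).const_mul _)

lemma almost_convex {m d n : ℕ} {L R : ℝ}
    {a : Fin m → ℝ} (ha : ∀ j, a j = 1 ∨ a j = -1)
    {σ : ℝ → ℝ} (hσ : ContDiff ℝ 2 σ)
    (hσ'' : ∀ u, |deriv (deriv σ) u| ≤ L)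
    {f : ℝ → ℝ} (hf : ContDiff ℝ 2 f) (hfconv : ConvexOn ℝ Set.univ f)
    (hfnonneg : ∀ u, 0 ≤ f u) (hfself : ∀ u, |deriv f u| ≤ f u)
    {x : Fin n → EuclideanSpace ℝ (Fin d)} {y : Fin n → ℝ}
    (hx : ∀ i, ‖x i‖ ≤ R) (hy : ∀ i, y i = 1 ∨ y i = -1)
    (hm0 : m ≠ 0)
    (u w : EuclideanSpace ℝ (Fin m × Fin d))
    (hmw : 2 * L * R ^ 2 * ‖w - u‖ ^ 2 ≤ Real.sqrt m) :
    (3/4) * empLoss a σ f x y u - empLoss a σ f x y w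
      ≤ inner ℝ (gradient (empLoss a σ f x y) u) (u - w) := by
  set v := w - u with hv
  have hm1 : (1:ℝ) ≤ (m:ℝ) := by exact_mod_cast Nat.one_le_iff_ne_zero.mpr hm0
  have hsm : 0 < Real.sqrt m := Real.sqrt_pos.mpr (by linarith)
  have hL : 0 ≤ L := le_trans (abs_nonneg _) (hσ'' 0)
  have hσd : Differentiable ℝ σ := hσ.differentiable (by norm_num)
  have hσ1 : ContDiff ℝ 1 (deriv σ) := by
    have h2 : ContDiff ℝ (1 + 1) σ := by
      convert hσ using 2
      rfl
    exact (contDiff_succ_iff_deriv.mp h2).2.2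
  have hσ'd : Differentiable ℝ (deriv σ) := hσ1.differentiable (by norm_num)
  have hfd : Differentiable ℝ f := hf.differentiable (by norm_num)
  set b : Fin n → Fin m → ℝ := fun i j => ∑ i', u (j, i') * x i i' with hb
  set c : Fin n → Fin m → ℝ := fun i j => ∑ i', v (j, i') * x i i' with hc
  set h : Fin n → ℝ → ℝ :=
    fun i s => y i * ((1 / Real.sqrt m) * ∑ j, a j * σ (b i j + s * c i j)) with hh
  set h1 : Fin n → ℝ → ℝ :=
    fun i s => y i * ((1 / Real.sqrt m) * ∑ j, a j * (deriv σ (b i j + s * c i j) * c i j)) with hh1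
  set h2 : Fin n → ℝ → ℝ :=
    fun i s => y i * ((1 / Real.sqrt m) *
      ∑ j, a j * (deriv (deriv σ) (b i j + s * c i j) * c i j * c i j)) with hh2
  have harg : ∀ (i : Fin n) (j : Fin m) (s : ℝ),
      (∑ i' : Fin d, (u + s • v) (j, i') * x i i') = b i j + s * c i j := by
    intro i j s
    simp only [hb, hc, Finset.mul_sum, ← Finset.sum_add_distrib]
    apply Finset.sum_congr rfl
    intro i' _
    have he : (u + s • v) (j, i') = u (j, i') + s * v (j, i') := rfl
    rw [he]; ring
  have hphi : ∀ (i : Fin n) (s : ℝ), y i * Phi a σ (u + s • v) (x i) = h i s := by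
    intro i s
    simp only [Phi, hh, harg]
  have hA : ∀ (i : Fin n) (j : Fin m) (s : ℝ),
      HasDerivAt (fun s : ℝ => b i j + s * c i j) (c i j) s := by
    intro i j s
    simpa using ((hasDerivAt_id s).mul_const (c i j)).const_add (b i j)
  have hd1 : ∀ i s, HasDerivAt (h i) (h1 i s) s := by
    intro i s
    apply HasDerivAt.const_mul
    apply HasDerivAt.const_mul
    apply HasDerivAt.fun_sum
    intro j _
    exact (((hσd _).hasDerivAt).comp s (hA i j s)).const_mul (a j)
  have hd2 : ∀ i s, HasDerivAt (h1 i) (h2 i s) s := by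
    intro i s
    apply HasDerivAt.const_mul
    apply HasDerivAt.const_mul
    apply HasDerivAt.fun_sum
    intro j _
    exact ((((hσ'd _).hasDerivAt).comp s (hA i j s)).mul_const (c i j)).const_mul (a j)
  -- norm computations
  have hnormsq : ‖v‖ ^ 2 = ∑ j : Fin m, ∑ i' : Fin d, (v (j, i')) ^ 2 := by
    rw [EuclideanSpace.norm_eq, Real.sq_sqrt (by positivity)]
    rw [Fintype.sum_prod_type]
    simp [Real.norm_eq_abs, sq_abs]
  have hcsq : ∀ i, ∑ j, (c i j) ^ 2 ≤ R ^ 2 * ‖v‖ ^ 2 := by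
    intro i
    have hxR : ∑ i' : Fin d, (x i i') ^ 2 ≤ R ^ 2 := by
      have h0 : (0:ℝ) ≤ ‖x i‖ := norm_nonneg _
      have hle : ‖x i‖ ^ 2 ≤ R ^ 2 := by nlinarith [hx i]
      calc ∑ i' : Fin d, (x i i') ^ 2 = ‖x i‖ ^ 2 := by
            rw [EuclideanSpace.norm_eq, Real.sq_sqrt (by positivity)]
            simp [Real.norm_eq_abs, sq_abs]
        _ ≤ R ^ 2 := hle
    calc ∑ j, (c i j) ^ 2
        ≤ ∑ j, (∑ i', (v (j, i')) ^ 2) * (∑ i', (x i i') ^ 2) := by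
          apply Finset.sum_le_sum
          intro j _
          exact Finset.sum_mul_sq_le_sq_mul_sq _ _ _
      _ ≤ ∑ j, (∑ i', (v (j, i')) ^ 2) * R ^ 2 := by
          apply Finset.sum_le_sum
          intro j _
          exact mul_le_mul_of_nonneg_left hxR (by positivity)
      _ = R ^ 2 * ‖v‖ ^ 2 := by
          rw [hnormsq, ← Finset.sum_mul]
          ring
  have hK2 : ∀ i s, |h2 i s| ≤ L * R ^ 2 * ‖v‖ ^ 2 / Real.sqrt m := by
    intro i s
    have hyi : |y i| = 1 := by rcases hy i with hh | hh <;> simp [hh]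
    have hterm : ∀ j : Fin m,
        |a j * (deriv (deriv σ) (b i j + s * c i j) * c i j * c i j)| ≤ L * (c i j) ^ 2 := by
      intro j
      have haj : |a j| = 1 := by rcases ha j with hh | hh <;> simp [hh]
      rw [abs_mul, haj, one_mul, abs_mul, abs_mul]
      have hb1 := hσ'' (b i j + s * c i j)
      have hb2 : |c i j| * |c i j| = (c i j) ^ 2 := by
        rw [← abs_mul, abs_mul_self]; ring
      nlinarith [abs_nonneg (c i j), abs_nonneg (deriv (deriv σ) (b i j + s * c i j))]
    have habs : |h2 i s| ≤ (1 / Real.sqrt m) * ∑ j, L * (c i j) ^ 2 := by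
      simp only [hh2]
      rw [abs_mul, hyi, one_mul, abs_mul, abs_of_nonneg (by positivity : (0:ℝ) ≤ 1 / Real.sqrt m)]
      apply mul_le_mul_of_nonneg_left _ (by positivity)
      exact (Finset.abs_sum_le_sum_abs _ _).trans (Finset.sum_le_sum fun j _ => hterm j)
    calc |h2 i s| ≤ (1 / Real.sqrt m) * ∑ j, L * (c i j) ^ 2 := habs
      _ = (1 / Real.sqrt m) * (L * ∑ j, (c i j) ^ 2) := by
          simp only [Finset.mul_sum]
      _ ≤ (1 / Real.sqrt m) * (L * (R ^ 2 * ‖v‖ ^ 2)) := by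
          apply mul_le_mul_of_nonneg_left _ (by positivity)
          exact mul_le_mul_of_nonneg_left (hcsq i) hL
      _ = L * R ^ 2 * ‖v‖ ^ 2 / Real.sqrt m := by ring
  have hKhalf : L * R ^ 2 * ‖v‖ ^ 2 / Real.sqrt m ≤ 1 / 2 := by
    rw [div_le_iff₀ hsm]
    nlinarith [hmw]
  have htay : ∀ i, |h i 1 - h i 0 - h1 i 0| ≤ (L * R ^ 2 * ‖v‖ ^ 2 / Real.sqrt m) / 2 :=
    fun i => taylor_abs_le (hd1 i) (hd2 i) (hK2 i)
  have hper : ∀ i, (3/4) * f (h i 0) + deriv f (h i 0) * h1 i 0 ≤ f (h i 1) := by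
    intro i
    have hconv := convex_tangent_le hfconv ((hfd (h i 0)).hasDerivAt) (h i 1)
    have h14 : |h i 1 - h i 0 - h1 i 0| ≤ 1 / 4 := le_trans (htay i) (by linarith [hKhalf])
    have habs := abs_le.mp h14
    have hsf := abs_le.mp (hfself (h i 0))
    have hfn := hfnonneg (h i 0)
    nlinarith [habs.1, habs.2, hsf.1, hsf.2, hconv]
  -- averaging
  have hGeq : ∀ s : ℝ, empLoss a σ f x y (u + s • v) = (1 / (n:ℝ)) * ∑ i, f (h i s) := by
    intro s
    unfold empLoss
    congr 1
    exact Finset.sum_congr rfl fun i _ => by rw [hphi i s]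
  have hFdiff := empLoss_differentiable a σ f x y hσd hfd
  have hgrad := (hFdiff u).hasGradientAt
  have hF : HasFDerivAt (empLoss a σ f x y)
      ((InnerProductSpace.toDual ℝ _) (gradient (empLoss a σ f x y) u)) u :=
    hasGradientAt_iff_hasFDerivAt.mp hgrad
  have hcurve : HasDerivAt (fun s : ℝ => u + s • v) v 0 := by
    simpa using ((hasDerivAt_id (0:ℝ)).smul_const v).const_add u
  have hcomp : HasDerivAt (fun s : ℝ => empLoss a σ f x y (u + s • v))
      (inner ℝ (gradient (empLoss a σ f x y) u) v : ℝ) 0 := by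
    have := hF.comp_hasDerivAt_of_eq (hf := hcurve) (hy := by simp)
    simp only [InnerProductSpace.toDual_apply_apply] at this
    exact this
  have hcomp2 : HasDerivAt (fun s : ℝ => empLoss a σ f x y (u + s • v))
      ((1 / (n:ℝ)) * ∑ i, deriv f (h i 0) * h1 i 0) 0 := by
    have hg : HasDerivAt (fun s : ℝ => (1 / (n:ℝ)) * ∑ i, f (h i s))
        ((1 / (n:ℝ)) * ∑ i, deriv f (h i 0) * h1 i 0) 0 := by
      apply HasDerivAt.const_mul
      apply HasDerivAt.fun_sum
      intro i _
      exact ((hfd (h i 0)).hasDerivAt).comp 0 (hd1 i 0)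
    exact hg.congr_of_eventuallyEq (Filter.Eventually.of_forall fun s => hGeq s)
  have heq : (inner ℝ (gradient (empLoss a σ f x y) u) v : ℝ)
      = (1 / (n:ℝ)) * ∑ i, deriv f (h i 0) * h1 i 0 := hcomp.unique hcomp2
  have hFu : empLoss a σ f x y u = (1 / (n:ℝ)) * ∑ i, f (h i 0) := by
    have := hGeq 0
    simpa using this
  have hFw : empLoss a σ f x y w = (1 / (n:ℝ)) * ∑ i, f (h i 1) := by
    have h1w : u + (1:ℝ) • v = w := by rw [hv]; simp
    have := hGeq 1
    rw [h1w] at this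
    exact this
  have hsumle : (1 / (n:ℝ)) * ∑ i, ((3/4) * f (h i 0) + deriv f (h i 0) * h1 i 0)
      ≤ (1 / (n:ℝ)) * ∑ i, f (h i 1) :=
    mul_le_mul_of_nonneg_left (Finset.sum_le_sum fun i _ => hper i) (by positivity)
  have hexp : (1 / (n:ℝ)) * ∑ i, ((3/4) * f (h i 0) + deriv f (h i 0) * h1 i 0)
      = (3/4) * empLoss a σ f x y u + (inner ℝ (gradient (empLoss a σ f x y) u) v : ℝ) := by
    rw [Finset.sum_add_distrib, mul_add, heq, hFu, ← Finset.mul_sum]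
    ring
  have hneg : (inner ℝ (gradient (empLoss a σ f x y) u) (u - w) : ℝ)
      = -(inner ℝ (gradient (empLoss a σ f x y) u) v : ℝ) := by
    rw [hv, ← neg_sub w u, inner_neg_right]
  rw [hneg]
  rw [hexp] at hsumle
  rw [hFw]
  linarith

/-- regret bound for GD under the descent condition when the
width dominates the distances to the comparator. -/
theorem train_loss_regret_wide
    {m d n : ℕ} (ℓ L R η : ℝ)
    (a : Fin m → ℝ) (ha : ∀ j, a j = 1 ∨ a j = -1)
    (σ : ℝ → ℝ) (hσ : ContDiff ℝ 2 σ)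
    (hσ' : ∀ u, |deriv σ u| ≤ ℓ) (hσ'' : ∀ u, |deriv (deriv σ) u| ≤ L)
    (f : ℝ → ℝ) (hf : ContDiff ℝ 2 f) (hfconv : ConvexOn ℝ Set.univ f)
    (hfnonneg : ∀ u, 0 ≤ f u) (hfself : ∀ u, |deriv f u| ≤ f u)
    (x : Fin n → EuclideanSpace ℝ (Fin d)) (y : Fin n → ℝ)
    (hx : ∀ i, ‖x i‖ ≤ R) (hy : ∀ i, y i = 1 ∨ y i = -1)
    (hη : 0 < η)
    (w₀ : EuclideanSpace ℝ (Fin m × Fin d))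
    (W : ℕ → EuclideanSpace ℝ (Fin m × Fin d)) (hW0 : W 0 = w₀)
    (hWrec : ∀ t : ℕ, W (t + 1) = W t - η • gradient (empLoss a σ f x y) (W t))
    (hdescent : ∀ t : ℕ,
      empLoss a σ f x y (W (t + 1))
        ≤ empLoss a σ f x y (W t) - (η / 2) * ‖gradient (empLoss a σ f x y) (W t)‖ ^ 2)
    (w : EuclideanSpace ℝ (Fin m × Fin d)) (T : ℕ) (hT : 1 ≤ T)
    (hm : ∀ t : ℕ, t < T → 2 * L * R ^ 2 * ‖w - W t‖ ^ 2 ≤ Real.sqrt m) :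
    (1 / (T : ℝ)) * ∑ t ∈ Finset.Icc 1 T, empLoss a σ f x y (W t)
      ≤ 2 * empLoss a σ f x y w + 2 * ‖w - w₀‖ ^ 2 / (η * T)
        + empLoss a σ f x y w₀ / (2 * T) := by

  have hFnonneg : ∀ z, 0 ≤ empLoss a σ f x y z := fun z =>
    mul_nonneg (by positivity) (Finset.sum_nonneg fun i _ => hfnonneg _)
  have hTpos : (0:ℝ) < T := by exact_mod_cast Nat.lt_of_lt_of_le Nat.zero_lt_one hT
  by_cases hm0 : m = 0
  · -- degenerate width: the weight space is a subsingleton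
    subst hm0
    have hsub : Subsingleton (EuclideanSpace ℝ (Fin 0 × Fin d)) :=
      ⟨fun p q => PiLp.ext fun i => i.1.elim0⟩
    have hWt : ∀ t, W t = w₀ := fun t => Subsingleton.elim _ _
    have hww : w = w₀ := Subsingleton.elim _ _
    have hcsum : ∑ t ∈ Finset.Icc 1 T, empLoss a σ f x y (W t)
        = (T : ℝ) * empLoss a σ f x y w₀ := by
      rw [Finset.sum_congr rfl fun t _ => by rw [hWt t]]
      rw [Finset.sum_const, Nat.card_Icc]
      simp [nsmul_eq_mul]
    rw [hcsum, hww, sub_self]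
    have h0 : (1 / (T:ℝ)) * ((T:ℝ) * empLoss a σ f x y w₀) = empLoss a σ f x y w₀ := by
      field_simp
    rw [h0]
    have hc := hFnonneg w₀
    have hdiv : 0 ≤ empLoss a σ f x y w₀ / (2 * (T:ℝ)) := by positivity
    have hz : ‖(0 : EuclideanSpace ℝ (Fin 0 × Fin d))‖ ^ 2 = 0 := by simp
    rw [hz]
    have : (2:ℝ) * 0 / (η * T) = 0 := by ring
    rw [this]
    linarith
  · -- main case
    set F := empLoss a σ f x y with hF
    have key : ∀ t : ℕ, t < T →
        F (W (t + 1)) - (1/4) * F (W t)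
          ≤ F w + (‖w - W t‖ ^ 2 - ‖w - W (t + 1)‖ ^ 2) / (2 * η) := by
      intro t ht
      have hac := almost_convex ha hσ hσ'' hf hfconv hfnonneg hfself hx hy hm0
        (W t) w (hm t ht)
      set g := gradient F (W t) with hg
      have hid : w - W (t + 1) = (w - W t) + η • g := by
        rw [hWrec t]
        abel
      have hnorm : ‖w - W (t + 1)‖ ^ 2
          = ‖w - W t‖ ^ 2 + 2 * (inner ℝ (w - W t) (η • g) : ℝ) + ‖η • g‖ ^ 2 := by
        rw [hid]
        exact norm_add_sq_real _ _
      have hinner : (inner ℝ (w - W t) (η • g) : ℝ) = - (η * (inner ℝ g (W t - w) : ℝ)) := by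
        rw [real_inner_smul_right, real_inner_comm]
        rw [show w - W t = -(W t - w) by abel, inner_neg_right]
        ring
      have hns : ‖η • g‖ ^ 2 = η ^ 2 * ‖g‖ ^ 2 := by
        rw [norm_smul, Real.norm_eq_abs, abs_of_pos hη, mul_pow]
      have hdiv : (‖w - W t‖ ^ 2 - ‖w - W (t + 1)‖ ^ 2) / (2 * η)
          = (inner ℝ g (W t - w) : ℝ) - (η / 2) * ‖g‖ ^ 2 := by
        rw [hnorm, hinner, hns]
        field_simp
        ring
      have hdes := hdescent t
      rw [hdiv]
      have hac' : (3/4) * F (W t) - F w ≤ (inner ℝ g (W t - w) : ℝ) := hac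
      have hdes' : F (W (t + 1)) ≤ F (W t) - (η / 2) * ‖g‖ ^ 2 := hdes
      linarith
    -- summation
    set B := F w with hB
    set D : ℕ → ℝ := fun t => ‖w - W t‖ ^ 2 with hD
    have hsum : ∑ t ∈ Finset.range T, (F (W (t + 1)) - (1/4) * F (W t))
        ≤ ∑ t ∈ Finset.range T, (B + (D t - D (t + 1)) / (2 * η)) := by
      apply Finset.sum_le_sum
      intro t ht
      exact key t (Finset.mem_range.mp ht)
    have hlhs : ∑ t ∈ Finset.range T, (F (W (t + 1)) - (1/4) * F (W t))
        = (∑ t ∈ Finset.range T, F (W (t + 1)))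
          - (1/4) * ∑ t ∈ Finset.range T, F (W t) := by
      rw [Finset.sum_sub_distrib, Finset.mul_sum]
    have hrhs : ∑ t ∈ Finset.range T, (B + (D t - D (t + 1)) / (2 * η))
        = (T : ℝ) * B + (D 0 - D T) / (2 * η) := by
      rw [Finset.sum_add_distrib, Finset.sum_const, Finset.card_range]
      rw [← Finset.sum_div, Finset.sum_range_sub' D]
      simp [nsmul_eq_mul]
    have hS1 : ∑ t ∈ Finset.Icc 1 T, F (W t) = ∑ t ∈ Finset.range T, F (W (t + 1)) := by
      rw [← Finset.Ico_add_one_right_eq_Icc, Finset.sum_Ico_eq_sum_range]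
      exact Finset.sum_congr (by norm_num) fun i _ => by rw [Nat.add_comm]
    have hS0 : ∑ t ∈ Finset.range T, F (W t)
        = (∑ t ∈ Finset.range T, F (W (t + 1))) + F (W 0) - F (W T) := by
      have e1 : ∑ t ∈ Finset.range (T + 1), F (W t)
          = (∑ t ∈ Finset.range T, F (W t)) + F (W T) := Finset.sum_range_succ _ _
      have e2 : ∑ t ∈ Finset.range (T + 1), F (W t)
          = (∑ t ∈ Finset.range T, F (W (t + 1))) + F (W 0) := Finset.sum_range_succ' _ _
      linarith
    set S : ℝ := ∑ t ∈ Finset.range T, F (W (t + 1)) with hS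
    have hmain : (3/4) * S ≤ (T : ℝ) * B + D 0 / (2 * η) + (1/4) * F (W 0) := by
      rw [hlhs, hrhs, hS0] at hsum
      have hDT : 0 ≤ D T := by positivity
      have hFT : 0 ≤ F (W T) := hFnonneg _
      have hdivDT : 0 ≤ D T / (2 * η) := by positivity
      have : (D 0 - D T) / (2 * η) = D 0 / (2 * η) - D T / (2 * η) := by ring
      rw [this] at hsum
      linarith
    -- final arithmetic
    have hD0 : D 0 = ‖w - w₀‖ ^ 2 := by rw [hD]; simp [hW0]
    have hA0 : F (W 0) = F w₀ := by rw [hW0]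
    set q : ℝ := D 0 / (2 * η) with hq
    have hq0 : 0 ≤ q := by positivity
    have hB0 : 0 ≤ B := hFnonneg _
    have hA00 : 0 ≤ F (W 0) := hFnonneg _
    have hTB : 0 ≤ (T : ℝ) * B := mul_nonneg (le_of_lt hTpos) hB0
    have final1 : S ≤ 2 * (T : ℝ) * B + 4 * q + F (W 0) / 2 := by linarith
    have expand : (T : ℝ) * (2 * B + 2 * ‖w - w₀‖ ^ 2 / (η * T) + F w₀ / (2 * T))
        = 2 * (T : ℝ) * B + 4 * q + F (W 0) / 2 := by
      rw [hq, hD0, hA0]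
      field_simp
      ring
    rw [hS1]
    calc (1 / (T:ℝ)) * S
        ≤ (1 / (T:ℝ)) * ((T : ℝ) * (2 * B + 2 * ‖w - w₀‖ ^ 2 / (η * T) + F w₀ / (2 * T))) := by
          apply mul_le_mul_of_nonneg_left _ (by positivity)
          rw [expand]
          exact final1
      _ = 2 * B + 2 * ‖w - w₀‖ ^ 2 / (η * T) + F w₀ / (2 * T) := by
          field_simp
end
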